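/- Let (g, t) be a construction in a construction space matching a pattern (p, v). Then for every decomposition Δ of (p, v) there exists a decomposition D of (g, t) such that D matches Δ. -/

import Mathlib

namespace RST

/-! ## Type systems -/

/-- A relation (given as a set of pairs) is a partial order on the set `Ty`. -/
def IsPartialOrderOn {U : Type*} (Ty : Set U) (le : Set (U × U)) : Prop :=
  (∀ p ∈ le, p.1 ∈ Ty ∧ p.2 ∈ Ty) ∧
  (∀ τ ∈ Ty, (τ, τ) ∈ le) ∧
  (∀ a b : U, (a, b) ∈ le → (b, a) ∈ le → a = b) ∧
  (∀ a b c : U, (a, b) ∈ le → (b, c) ∈ le → (a, c) ∈ le)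

/-- The subtype closure of `Ty'` in the type system `(Ty, le)`. -/
def subtypeClosure {U : Type*} (Ty : Set U) (le : Set (U × U)) (Ty' : Set U) : Set U :=
  {τ | τ ∈ Ty ∧ ∃ τ' ∈ Ty', (τ, τ') ∈ le}

/-- The set of all subtype closures of subsets of `Ty`. -/
def SC {U : Type*} (Ty : Set U) (le : Set (U × U)) : Set (Set U) :=
  {S | ∃ Ty' ⊆ Ty, S = subtypeClosure Ty le Ty'}

/-- The candidate order of an upper bound extension: the reflexive closure (on `Ty ∪ Tystar`)
of `le` together with the pairs `(τ, f S)` for `τ ∈ S ∈ SC Ty le`. -/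
def upperBoundRel {U : Type*} (Ty Tystar : Set U) (le : Set (U × U)) (f : Set U → U) :
    Set (U × U) :=
  (le ∪ {p : U × U | ∃ S ∈ SC Ty le, p.1 ∈ S ∧ p.2 = f S}) ∪
    {p : U × U | p.1 = p.2 ∧ p.1 ∈ Ty ∪ Tystar}

/-! ## Graphs -/

/-- A (raw) directed labelled bipartite graph: tokens `Tk`, configurators `Cf`, arrows `Arr`,
incidence, arrow indices and vertex labels all given relationally (as sets of pairs), so that
unions of graphs are componentwise unions. -/
structure PreGraph (V A L : Type*) where
  Tk : Set V
  Cf : Set V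
  Arr : Set A
  inc : Set (A × (V × V))
  ia : Set (A × ℕ)
  tl : Set (V × L)
  cl : Set (V × L)

variable {V A L : Type*}

instance : Union (PreGraph V A L) :=
  ⟨fun g h =>
    ⟨g.Tk ∪ h.Tk, g.Cf ∪ h.Cf, g.Arr ∪ h.Arr, g.inc ∪ h.inc, g.ia ∪ h.ia,
      g.tl ∪ h.tl, g.cl ∪ h.cl⟩⟩

def PreGraph.Subgraph (h g : PreGraph V A L) : Prop :=
  h.Tk ⊆ g.Tk ∧ h.Cf ⊆ g.Cf ∧ h.Arr ⊆ g.Arr ∧ h.inc ⊆ g.inc ∧ h.ia ⊆ g.ia ∧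
    h.tl ⊆ g.tl ∧ h.cl ⊆ g.cl

/-- The vertices adjacent to `u` (together with `u`). -/
def PreGraph.adjTo (g : PreGraph V A L) (u : V) : Set V :=
  {u} ∪ {v | ∃ a ∈ g.Arr, (a, (v, u)) ∈ g.inc ∨ (a, (u, v)) ∈ g.inc}

/-- The arrows incident to `u`. -/
def PreGraph.incidentArrows (g : PreGraph V A L) (u : V) : Set A :=
  {a | a ∈ g.Arr ∧ ∃ v, (a, (v, u)) ∈ g.inc ∨ (a, (u, v)) ∈ g.inc}

/-- The restriction of a graph to given vertex and arrow sets. -/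
def PreGraph.restrict (g : PreGraph V A L) (Vs : Set V) (As : Set A) : PreGraph V A L :=
  ⟨g.Tk ∩ Vs, g.Cf ∩ Vs, g.Arr ∩ As, {q | q ∈ g.inc ∧ q.1 ∈ As},
    {q | q ∈ g.ia ∧ q.1 ∈ As}, {q | q ∈ g.tl ∧ q.1 ∈ Vs}, {q | q ∈ g.cl ∧ q.1 ∈ Vs}⟩

/-- The neighbourhood of a vertex `u`. -/
def PreGraph.Nh (g : PreGraph V A L) (u : V) : PreGraph V A L :=
  g.restrict (g.adjTo u) (g.incidentArrows u)

/-- A set of pairs is (the graph of) a function with domain `D`. -/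
def IsFunctionOn {α β : Type*} (R : Set (α × β)) (D : Set α) : Prop :=
  (∀ p ∈ R, p.1 ∈ D) ∧ ∀ x ∈ D, ∃! y, (x, y) ∈ R

/-- A raw graph is a genuine directed labelled bipartite graph. -/
def IsGraph (g : PreGraph V A L) : Prop :=
  Disjoint g.Tk g.Cf ∧
  IsFunctionOn g.inc g.Arr ∧
  (∀ a v w, (a, (v, w)) ∈ g.inc → (v ∈ g.Tk ∧ w ∈ g.Cf) ∨ (v ∈ g.Cf ∧ w ∈ g.Tk)) ∧
  IsFunctionOn g.ia g.Arr ∧ IsFunctionOn g.tl g.Tk ∧ IsFunctionOn g.cl g.Cf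

/-- `ars` is the list of incoming arrows of `u`, listed in increasing index order
(the arrow at position `i` carries index `i+1`). -/
def InArrowSeq (g : PreGraph V A L) (u : V) (ars : List A) : Prop :=
  ars.Nodup ∧ (∀ a : A, a ∈ ars ↔ a ∈ g.Arr ∧ ∃ w, (a, (w, u)) ∈ g.inc) ∧
  ∀ (i : ℕ) (a : A), ars[i]? = some a → (a, i + 1) ∈ g.ia

/-- `t` is an output token of the configurator `u`. -/
def OutputTok (g : PreGraph V A L) (u t : V) : Prop :=
  ∃ a ∈ g.Arr, (a, (u, t)) ∈ g.inc

/-- `ts` is the input token-sequence of the configurator `u`. -/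
def InputTokSeq (g : PreGraph V A L) (u : V) (ts : List V) : Prop :=
  ∃ ars : List A, InArrowSeq g u ars ∧
    List.Forall₂ (fun a v => (a, (v, u)) ∈ g.inc) ars ts

/-- `τs` is the input type-sequence of the configurator `u`. -/
def InputTypeSeq (g : PreGraph V A L) (u : V) (τs : List L) : Prop :=
  ∃ ts : List V, InputTokSeq g u ts ∧ List.Forall₂ (fun v τ => (v, τ) ∈ g.tl) ts τs

/-- `g` is a configuration of the constructor `c` (with signature `(ins, out)`),
whose single configurator is `u`. -/
def IsConfiguration (le : Set (L × L)) (g : PreGraph V A L) (u : V) (c : L)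
    (ins : List L) (out : L) : Prop :=
  IsGraph g ∧ g.Cf = {u} ∧ (u, c) ∈ g.cl ∧
  g.Tk = {v | ∃ a ∈ g.Arr, (a, (v, u)) ∈ g.inc ∨ (a, (u, v)) ∈ g.inc} ∧
  (∃! a0 : A, a0 ∈ g.Arr ∧ ∃ w, (a0, (u, w)) ∈ g.inc) ∧
  (∀ a0 ∈ g.Arr, ∀ w : V, (a0, (u, w)) ∈ g.inc →
      (a0, 0) ∈ g.ia ∧ ∃ σ, (w, σ) ∈ g.tl ∧ (σ, out) ∈ le) ∧
  (∃ ars : List A, InArrowSeq g u ars ∧ ars.length = ins.length ∧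
    ∀ (i : ℕ) (a : A) (τ : L), ars[i]? = some a → ins[i]? = some τ →
      ∃ w σ, (a, (w, u)) ∈ g.inc ∧ (w, σ) ∈ g.tl ∧ (σ, τ) ∈ le)

/-- A structure graph for the constructor specification `(C, sig)` over types `(Ty, le)`. -/
def IsStructureGraph (Ty : Set L) (le : Set (L × L)) (C : Set L)
    (sig : Set (L × (List L × L))) (g : PreGraph V A L) : Prop :=
  IsGraph g ∧ (∀ x τ, (x, τ) ∈ g.tl → τ ∈ Ty) ∧
  ∀ u ∈ g.Cf, ∃ c ins out, (u, c) ∈ g.cl ∧ c ∈ C ∧ (c, (ins, out)) ∈ sig ∧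
    IsConfiguration le (g.Nh u) u c ins out

/-! ## Construction spaces -/

/-- The raw data of a construction space: a type system, a constructor specification and
a structure graph. -/
structure CSpace (V A L : Type*) where
  Ty : Set L
  le : Set (L × L)
  C : Set L
  sig : Set (L × (List L × L))
  G : PreGraph V A L

instance : Union (CSpace V A L) :=
  ⟨fun c d => ⟨c.Ty ∪ d.Ty, c.le ∪ d.le, c.C ∪ d.C, c.sig ∪ d.sig, c.G ∪ d.G⟩⟩

/-- The raw data forms a genuine construction space. -/
def IsCSpace (Cs : CSpace V A L) : Prop :=
  IsPartialOrderOn Cs.Ty Cs.le ∧ Disjoint Cs.C Cs.Ty ∧ IsFunctionOn Cs.sig Cs.C ∧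
  (∀ c ins out, (c, (ins, out)) ∈ Cs.sig →
      ins ≠ [] ∧ (∀ τ ∈ ins, τ ∈ Cs.Ty) ∧ out ∈ Cs.Ty) ∧
  IsStructureGraph Cs.Ty Cs.le Cs.C Cs.sig Cs.G

/-- Token-functionality of the constructors of a structure graph. -/
def TokenFunctional (g : PreGraph V A L) : Prop :=
  ∀ u u' c, u ∈ g.Cf → u' ∈ g.Cf → (u, c) ∈ g.cl → (u', c) ∈ g.cl →
    ∀ ts, InputTokSeq g u ts → InputTokSeq g u' ts →
      ∀ t t', OutputTok g u t → OutputTok g u' t' → t = t'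

/-- Type-functionality of the constructors of a structure graph. -/
def TypeFunctional (g : PreGraph V A L) : Prop :=
  ∀ u u' c, u ∈ g.Cf → u' ∈ g.Cf → (u, c) ∈ g.cl → (u', c) ∈ g.cl →
    ∀ τs, InputTypeSeq g u τs → InputTypeSeq g u' τs →
      ∀ t t' τ τ', OutputTok g u t → OutputTok g u' t' →
        (t, τ) ∈ g.tl → (t', τ') ∈ g.tl → τ = τ'

def IsFunctionalGraph (g : PreGraph V A L) : Prop :=
  TokenFunctional g ∧ TypeFunctional g

/-! ## Representational systems -/

/-- The raw data of a representational system: grammatical, entailment and identification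
spaces. -/
structure RSystem (V A L : Type*) where
  Gs : CSpace V A L
  Es : CSpace V A L
  Is : CSpace V A L

instance : Union (RSystem V A L) :=
  ⟨fun r s => ⟨r.Gs ∪ s.Gs, r.Es ∪ s.Es, r.Is ∪ s.Is⟩⟩

/-- The universal space of a representational system. -/
def RSystem.uspace (R : RSystem V A L) : CSpace V A L := (R.Gs ∪ R.Es) ∪ R.Is

/-- `R` is a representational system formed over the type system `(Ty, le)` and the
meta-type system `(MTy, Mle)`. -/
def IsRSystem (R : RSystem V A L) (Ty : Set L) (le : Set (L × L))
    (MTy : Set L) (Mle : Set (L × L)) : Prop :=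
  IsPartialOrderOn Ty le ∧ IsPartialOrderOn MTy Mle ∧
  IsPartialOrderOn (Ty ∪ MTy) (le ∪ Mle) ∧
  R.Gs.Ty = Ty ∧ R.Gs.le = le ∧ IsCSpace R.Gs ∧ IsFunctionalGraph R.Gs.G ∧
  R.Es.Ty = Ty ∧ R.Es.le = le ∧ IsCSpace R.Es ∧ R.Es.G.Tk ⊆ R.Gs.G.Tk ∧
  R.Is.Ty = Ty ∪ MTy ∧ R.Is.le = le ∪ Mle ∧ IsCSpace R.Is ∧
  (∀ x ∈ R.Is.G.Tk, x ∉ R.Gs.G.Tk → ∃ τ ∈ MTy, (x, τ) ∈ R.Is.G.tl) ∧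
  (∀ x ∈ R.Is.G.Tk, (∃ u ∈ R.Is.G.Cf, OutputTok R.Is.G u x) → x ∉ R.Gs.G.Tk) ∧
  IsCSpace (R.Gs ∪ R.Es) ∧ IsCSpace (R.Gs ∪ R.Is) ∧ IsCSpace (R.Es ∪ R.Is) ∧
  Disjoint R.Gs.C R.Es.C ∧ Disjoint R.Gs.C R.Is.C ∧ Disjoint R.Es.C R.Is.C

/-- `(R, R', Is'')` is an inter-representational-system encoding, where `R` is formed over
`(Ty, le)` and `(MTy, Mle)`, `R'` over `(Ty', le')` and `(MTy', Mle')`, and `Is''` is an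
identification space formed over `(Ty ∪ Ty', le ∪ le')` and `(MTy'', Mle'')`. -/
def IsIRSE (R R' : RSystem V A L) (Is'' : CSpace V A L)
    (Ty : Set L) (le : Set (L × L)) (MTy : Set L) (Mle : Set (L × L))
    (Ty' : Set L) (le' : Set (L × L)) (MTy' : Set L) (Mle' : Set (L × L))
    (MTy'' : Set L) (Mle'' : Set (L × L)) : Prop :=
  IsRSystem R Ty le MTy Mle ∧ IsRSystem R' Ty' le' MTy' Mle' ∧
  IsRSystem (R ∪ R') (Ty ∪ Ty') (le ∪ le') (MTy ∪ MTy') (Mle ∪ Mle') ∧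
  IsPartialOrderOn MTy'' Mle'' ∧
  IsPartialOrderOn ((Ty ∪ Ty') ∪ MTy'') ((le ∪ le') ∪ Mle'') ∧
  Is''.Ty = (Ty ∪ Ty') ∪ MTy'' ∧ Is''.le = (le ∪ le') ∪ Mle'' ∧ IsCSpace Is'' ∧
  MTy ∪ MTy' ⊆ MTy'' ∧ Mle ∪ Mle' ⊆ Mle'' ∧
  (∀ x ∈ Is''.G.Tk, x ∉ (R.Gs ∪ R'.Gs).G.Tk → ∃ τ ∈ MTy'', (x, τ) ∈ Is''.G.tl) ∧
  (∀ x ∈ Is''.G.Tk, (∃ u ∈ Is''.G.Cf, OutputTok Is''.G u x) →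
      x ∉ (R.Gs ∪ R'.Gs).G.Tk) ∧
  IsCSpace ((R.Gs ∪ R'.Gs) ∪ Is'') ∧ IsCSpace ((R.Es ∪ R'.Es) ∪ Is'') ∧
  IsCSpace ((R.Is ∪ R'.Is) ∪ Is'') ∧
  Disjoint Is''.C (R.Gs ∪ R'.Gs).C ∧ Disjoint Is''.C (R.Es ∪ R'.Es).C ∧
  Disjoint Is''.C (R.Is ∪ R'.Is).C

/-! ## Trails -/

/-- A trail candidate: a list of arrows together with an associated source and target vertex
(needed for the empty trail `[]_v`). -/
structure Trail (V A : Type*) where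
  arrows : List A
  src : V
  tgt : V

/-- The empty trail `[]_v`. -/
def Trail.nil {V A : Type*} (v : V) : Trail V A := ⟨[], v, v⟩

/-- Concatenation `e ⊕ w` of trails. -/
def Trail.append {V A : Type*} (e w : Trail V A) : Trail V A :=
  ⟨e.arrows ++ w.arrows, e.src, w.tgt⟩

/-- The image of a trail under vertex/arrow maps. -/
def Trail.map {V A : Type*} (fv : V → V) (fa : A → A) (tr : Trail V A) : Trail V A :=
  ⟨tr.arrows.map fa, fv tr.src, fv tr.tgt⟩

/-- The arrows chain through the graph from `s` to `t`. -/
def ChainIn (g : PreGraph V A L) : List A → V → V → Prop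
  | [], s, t => s = t
  | a :: rest, s, t => a ∈ g.Arr ∧ ∃ m, (a, (s, m)) ∈ g.inc ∧ ChainIn g rest m t

/-- `tr` is a trail in `g`. -/
def IsTrailIn (g : PreGraph V A L) (tr : Trail V A) : Prop :=
  tr.arrows.Nodup ∧ ChainIn g tr.arrows tr.src tr.tgt ∧
  tr.src ∈ g.Tk ∪ g.Cf ∧ tr.tgt ∈ g.Tk ∪ g.Cf

/-- A trail is well-formed provided its source and target are tokens. -/
def WellFormed (g : PreGraph V A L) (tr : Trail V A) : Prop :=
  tr.src ∈ g.Tk ∧ tr.tgt ∈ g.Tk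

/-- `tr` is (source-)extendable by the arrow `a`. -/
def ExtendableBy (g : PreGraph V A L) (tr : Trail V A) (a : A) : Prop :=
  a ∈ g.Arr ∧ a ∉ tr.arrows ∧ ∃ s, (a, (s, tr.src)) ∈ g.inc

def Extendable (g : PreGraph V A L) (tr : Trail V A) : Prop :=
  ∃ a, ExtendableBy g tr a

def NonExtendable (g : PreGraph V A L) (tr : Trail V A) : Prop :=
  ¬ Extendable g tr

/-- `TES g tr S` holds iff `S` is the trail extension sequence of the trail `tr` in `g`,
following the recursive definition of TES. -/
inductive TES (g : PreGraph V A L) : Trail V A → List (Trail V A) → Prop where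
  | nonext (tr : Trail V A) (h : NonExtendable g tr) :
      TES g tr [⟨[], tr.src, tr.src⟩]
  | ext (tr : Trail V A) (a : A) (u : V) (ars : List A)
      (Ss : List (List (Trail V A)))
      (hext : ExtendableBy g tr a)
      (hinc : (a, (u, tr.src)) ∈ g.inc)
      (hars : InArrowSeq g u ars)
      (hlen : Ss.length = ars.length)
      (hrec : ∀ (i : ℕ) (ai : A) (si : V) (Si : List (Trail V A)),
          ars[i]? = some ai → Ss[i]? = some Si → (ai, (si, u)) ∈ g.inc →
          TES g ⟨ai :: a :: tr.arrows, si, tr.tgt⟩ Si) :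
      TES g tr (List.flatten (List.zipWith
        (fun (ai : A) (Si : List (Trail V A)) =>
          Si.map (fun e => (⟨e.arrows ++ [ai, a], e.src, tr.src⟩ : Trail V A)))
        ars Ss))

/-- The sequence of sources of a sequence of trails. -/
def srcSeq {V A : Type*} (S : List (Trail V A)) : List V := S.map Trail.src

/-- The right product `S ◁ w`, appending the trail `w` to each trail in `S`. -/
def rprod {V A : Type*} (S : List (Trail V A)) (w : Trail V A) : List (Trail V A) :=
  S.map fun e => e.append w

/-! ## Constructions -/

/-- Every token is the target of at most one arrow. -/
def UniStructured (g : PreGraph V A L) : Prop :=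
  ∀ x ∈ g.Tk, ∀ a ∈ g.Arr, ∀ b ∈ g.Arr,
    (∃ w, (a, (w, x)) ∈ g.inc) → (∃ w, (b, (w, x)) ∈ g.inc) → a = b

/-- `(g, t)` is a construction in the construction space `Cs`: `g` is a finite uni-structured
structure graph (a subgraph of the structure graph of `Cs`), `t` is a token of `g`, and every
vertex of `g` is the source of a trail targeting `t`. -/
def IsConstruction (Cs : CSpace V A L) (g : PreGraph V A L) (t : V) : Prop :=
  g.Subgraph Cs.G ∧ IsStructureGraph Cs.Ty Cs.le Cs.C Cs.sig g ∧
  g.Tk.Finite ∧ g.Cf.Finite ∧ g.Arr.Finite ∧ UniStructured g ∧ t ∈ g.Tk ∧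
  ∀ v ∈ g.Tk ∪ g.Cf, ∃ tr : Trail V A, IsTrailIn g tr ∧ tr.src = v ∧ tr.tgt = t

/-- `(g, t)` is a construction *in* `Cs` in the strong sense: moreover every configurator of `g`
has its full neighbourhood from the structure graph of `Cs`. -/
def IsConstructionIn (Cs : CSpace V A L) (g : PreGraph V A L) (t : V) : Prop :=
  IsConstruction Cs g t ∧ ∀ u ∈ g.Cf, g.Nh u = Cs.G.Nh u

/-- A trivial construction: the construct is its only vertex. -/
def TrivialC (g : PreGraph V A L) (t : V) : Prop := g.Tk ∪ g.Cf = {t}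

/-- A basic construction: exactly one configurator. -/
def BasicC (g : PreGraph V A L) : Prop := ∃ u, g.Cf = {u}

/-- The set of arrows occurring in a sequence of trails. -/
def trailArrowSet {V A : Type*} (TR : List (Trail V A)) : Set A :=
  {a | ∃ tr ∈ TR, a ∈ tr.arrows}

/-- The vertices of the `TR`-graph: vertices incident to arrows of trails of `TR`,
together with the associated vertex of any empty trail of `TR`. -/
def trailVertexSet (g : PreGraph V A L) (TR : List (Trail V A)) : Set V :=
  {v | (∃ a ∈ trailArrowSet TR, ∃ w, (a, (v, w)) ∈ g.inc ∨ (a, (w, v)) ∈ g.inc) ∨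
    ∃ tr ∈ TR, tr.arrows = [] ∧ tr.src = v}

/-- The `TR`-graph `v(TR)`. -/
def trGraph (g : PreGraph V A L) (TR : List (Trail V A)) : PreGraph V A L :=
  g.restrict (trailVertexSet g TR) (trailArrowSet TR)

/-- `((g', t), ics)` is a split of the construction `(g, t)`: `(g', t)` is a generator and
`ics` is the corresponding induced construction sequence (each induced construction is
`(v(TES(tri)), source(tri))`, the TES being computed in `(g, t)`). -/
def IsSplit (Cs : CSpace V A L) (g : PreGraph V A L) (t : V)
    (g' : PreGraph V A L) (ics : List (PreGraph V A L × V)) : Prop :=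
  IsConstruction Cs g' t ∧ g'.Subgraph g ∧
  ∃ trs : List (Trail V A), TES g' (Trail.nil t) trs ∧ ics.length = trs.length ∧
    ∀ (i : ℕ) (tri : Trail V A), trs[i]? = some tri →
      ∃ Si : List (Trail V A), TES g tri Si ∧ ics[i]? = some (trGraph g Si, tri.src)

/-! ## Decompositions -/

/-- A decomposition tree: vertices labelled by a graph and a token, with the incoming arrows
of every vertex given in index order by a list of subtrees. -/
inductive DTree (V A L : Type*) where
  | node : PreGraph V A L → V → List (DTree V A L) → DTree V A L

def DTree.rootGraph : DTree V A L → PreGraph V A L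
  | .node g _ _ => g

def DTree.rootTok : DTree V A L → V
  | .node _ t _ => t

def DTree.kids : DTree V A L → List (DTree V A L)
  | .node _ _ cs => cs

/-- `IsDecompositionOf Cs D g t` holds iff `D` is a decomposition of the construction
`(g, t)` in `Cs`. -/
inductive IsDecompositionOf (Cs : CSpace V A L) : DTree V A L → PreGraph V A L → V → Prop where
  | single (g : PreGraph V A L) (t : V) (h : IsConstruction Cs g t) :
      IsDecompositionOf Cs (.node g t []) g t
  | split (g : PreGraph V A L) (t : V) (g' : PreGraph V A L)
      (ics : List (PreGraph V A L × V)) (cs : List (DTree V A L))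
      (hc : IsConstruction Cs g t)
      (hsplit : IsSplit Cs g t g' ics)
      (hlen : cs.length = ics.length)
      (hrec : ∀ (i : ℕ) (ci : DTree V A L) (gi : PreGraph V A L) (ti : V),
          cs[i]? = some ci → ics[i]? = some (gi, ti) → IsDecompositionOf Cs ci gi ti) :
      IsDecompositionOf Cs (.node g' t cs) g t

/-- `LcsRel D ls` holds iff `ls` is the leaf construction-sequence of `D`. -/
inductive LcsRel : DTree V A L → List (PreGraph V A L × V) → Prop where
  | leaf (g : PreGraph V A L) (t : V) : LcsRel (.node g t []) [(g, t)]
  | node (g : PreGraph V A L) (t : V) (cs : List (DTree V A L))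
      (ls : List (List (PreGraph V A L × V)))
      (hne : cs ≠ []) (hlen : ls.length = cs.length)
      (h : ∀ (i : ℕ) (ci : DTree V A L) (li : List (PreGraph V A L × V)),
          cs[i]? = some ci → ls[i]? = some li → LcsRel ci li) :
      LcsRel (.node g t cs) ls.flatten

/-- `(p, w)` is one of the constructions labelling a vertex of the decomposition tree. -/
inductive LabelOf : DTree V A L → PreGraph V A L → V → Prop where
  | root (g : PreGraph V A L) (t : V) (cs : List (DTree V A L)) :
      LabelOf (.node g t cs) g t
  | child (g : PreGraph V A L) (t : V) (cs : List (DTree V A L))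
      (c : DTree V A L) (p : PreGraph V A L) (w : V) :
      c ∈ cs → LabelOf c p w → LabelOf (.node g t cs) p w

/-- The union of all the graphs labelling vertices of the decomposition tree
(the graph of the construction `ct(D)` of the decomposition `D`). -/
def DTree.ctGraph (D : DTree V A L) : PreGraph V A L :=
  ⟨{x | ∃ p w, LabelOf D p w ∧ x ∈ p.Tk},
   {x | ∃ p w, LabelOf D p w ∧ x ∈ p.Cf},
   {a | ∃ p w, LabelOf D p w ∧ a ∈ p.Arr},
   {q | ∃ p w, LabelOf D p w ∧ q ∈ p.inc},
   {q | ∃ p w, LabelOf D p w ∧ q ∈ p.ia},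
   {q | ∃ p w, LabelOf D p w ∧ q ∈ p.tl},
   {q | ∃ p w, LabelOf D p w ∧ q ∈ p.cl}⟩

/-- Every vertex label of the decomposition tree satisfies `P`. -/
inductive AllLabels (P : PreGraph V A L → V → Prop) : DTree V A L → Prop where
  | node (g : PreGraph V A L) (t : V) (cs : List (DTree V A L)) :
      P g t → (∀ c, c ∈ cs → AllLabels P c) → AllLabels P (.node g t cs)

/-- The subtree of a decomposition tree at a given position (a path of child indices). -/
def subtreeAt : List ℕ → DTree V A L → Option (DTree V A L)
  | [], D => some D
  | i :: rest, .node _ _ cs =>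
    match cs[i]? with
    | some c => subtreeAt rest c
    | none => none

/-! ## Patterns and embeddings -/

/-- An embedding of the graph `g` into the graph `p`: an isomorphism preserving arrow indices
and configurator labels, with token labels respecting the subtype relation `le`. -/
def IsEmbedding (le : Set (L × L)) (g p : PreGraph V A L) (fv : V → V) (fa : A → A) : Prop :=
  (∀ x ∈ g.Tk, fv x ∈ p.Tk) ∧ (∀ x ∈ g.Cf, fv x ∈ p.Cf) ∧
  (∀ x ∈ g.Tk ∪ g.Cf, ∀ y ∈ g.Tk ∪ g.Cf, fv x = fv y → x = y) ∧
  (∀ y ∈ p.Tk, ∃ x ∈ g.Tk, fv x = y) ∧ (∀ y ∈ p.Cf, ∃ x ∈ g.Cf, fv x = y) ∧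
  (∀ a ∈ g.Arr, fa a ∈ p.Arr) ∧
  (∀ a ∈ g.Arr, ∀ b ∈ g.Arr, fa a = fa b → a = b) ∧
  (∀ b ∈ p.Arr, ∃ a ∈ g.Arr, fa a = b) ∧
  (∀ a v w, (a, (v, w)) ∈ g.inc → (fa a, (fv v, fv w)) ∈ p.inc) ∧
  (∀ a n, (a, n) ∈ g.ia → (fa a, n) ∈ p.ia) ∧
  (∀ u c, (u, c) ∈ g.cl → (fv u, c) ∈ p.cl) ∧
  (∀ x τ, (x, τ) ∈ g.tl → ∃ σ, (fv x, σ) ∈ p.tl ∧ (τ, σ) ∈ le)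

/-- The construction `(g, t)` matches the pattern `(p, v)`. -/
def MatchesPattern (le : Set (L × L)) (g : PreGraph V A L) (t : V)
    (p : PreGraph V A L) (v : V) : Prop :=
  ∃ fv fa, IsEmbedding le g p fv fa ∧ fv t = v

/-- `Ps` is a pattern space for `Cs`: a construction space over the same type system and
constructor specification such that every construction of `Cs` matches some construction
of `Ps`. -/
def IsPatternSpace (Cs Ps : CSpace V A L) : Prop :=
  Ps.Ty = Cs.Ty ∧ Ps.le = Cs.le ∧ Ps.C = Cs.C ∧ Ps.sig = Cs.sig ∧ IsCSpace Ps ∧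
  ∀ g t, IsConstruction Cs g t →
    ∃ p v, IsConstruction Ps p v ∧ MatchesPattern Cs.le g t p v

/-- Vertex-wise matching of two same-shape decomposition trees under a common pair of maps. -/
inductive DMatches (le : Set (L × L)) (fv : V → V) (fa : A → A) :
    DTree V A L → DTree V A L → Prop where
  | node (g : PreGraph V A L) (t : V) (p : PreGraph V A L) (v : V)
      (cs ds : List (DTree V A L))
      (hemb : IsEmbedding le g p fv fa) (ht : fv t = v)
      (hlen : cs.length = ds.length)
      (hrec : ∀ (i : ℕ) (ci di : DTree V A L), cs[i]? = some ci → ds[i]? = some di →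
          DMatches le fv fa ci di) :
      DMatches le fv fa (.node g t cs) (.node p v ds)

/-- The decomposition `D` matches the (pattern) decomposition `Δ`: there is an arrow-index
preserving isomorphism of trees together with an embedding of `ct(D)` into `ct(Δ)` whose
restriction to each vertex label is an embedding into the corresponding pattern label. -/
def DecompositionMatches (le : Set (L × L)) (D Δ : DTree V A L) : Prop :=
  ∃ fv fa, IsEmbedding le D.ctGraph Δ.ctGraph fv fa ∧ fv D.rootTok = Δ.rootTok ∧
    DMatches le fv fa D Δ

/-! ## Descriptions -/

/-- A description: a set of decompositions of patterns (constructions in the pattern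
space `Ps`). -/
def IsDescriptionOf (Ps : CSpace V A L) (Ds : Set (DTree V A L)) : Prop :=
  ∀ Δ ∈ Ds, ∃ p v, IsConstruction Ps p v ∧ IsDecompositionOf Ps Δ p v

/-- The description `Ds` is complete for `Cs`. -/
def CompleteDescription (Cs : CSpace V A L) (Ds : Set (DTree V A L)) : Prop :=
  ∀ g t, IsConstruction Cs g t →
    ∃ Δ ∈ Ds, ∃ D, IsDecompositionOf Cs D g t ∧ DecompositionMatches Cs.le D Δ

/-- The set of patterns labelling vertices of decompositions in `Ds`. -/
def PatternsOf (Ds : Set (DTree V A L)) : Set (PreGraph V A L × V) :=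
  {pv | ∃ Δ ∈ Ds, LabelOf Δ pv.1 pv.2}

/-- Label-preserving isomorphism of patterns/constructions. -/
def LabelIsomorphic (g : PreGraph V A L) (t : V) (p : PreGraph V A L) (v : V) : Prop :=
  ∃ fv fa, IsEmbedding {q : L × L | q.1 = q.2} g p fv fa ∧ fv t = v

/-- The description `Ds` is compact: finitely many patterns up to label-preserving
isomorphism. -/
def CompactDescription (Ds : Set (DTree V A L)) : Prop :=
  ∃ Reps : Set (PreGraph V A L × V), Reps.Finite ∧
    ∀ pv ∈ PatternsOf Ds, ∃ qw ∈ Reps, LabelIsomorphic pv.1 pv.2 qw.1 qw.2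

/-! ## Transformation constraints and structural transformations -/

/-- A transformation-constraint-shaped triple: two patterns (or constructions) together with
a set of patterns (or constructions). -/
structure TConstraint (V A L : Type*) where
  pa : PreGraph V A L
  ca : V
  pb : PreGraph V A L
  cb : V
  Pc : Set (PreGraph V A L × V)

/-- The union of the graphs of a set of patterns. -/
def pGraph (P : Set (PreGraph V A L × V)) : PreGraph V A L :=
  ⟨{x | ∃ pv ∈ P, x ∈ pv.1.Tk}, {x | ∃ pv ∈ P, x ∈ pv.1.Cf},
   {a | ∃ pv ∈ P, a ∈ pv.1.Arr}, {q | ∃ pv ∈ P, q ∈ pv.1.inc},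
   {q | ∃ pv ∈ P, q ∈ pv.1.ia}, {q | ∃ pv ∈ P, q ∈ pv.1.tl},
   {q | ∃ pv ∈ P, q ∈ pv.1.cl}⟩

/-- A respectful embedding of the set of patterns `P` into the set of patterns `P'`. -/
def RespectfulEmbedding (le : Set (L × L)) (P P' : Set (PreGraph V A L × V))
    (fv : V → V) (fa : A → A) : Prop :=
  IsEmbedding le (pGraph P) (pGraph P') fv fa ∧
  ∀ pv ∈ P, ∃ qw ∈ P', IsEmbedding le pv.1 qw.1 fv fa ∧ fv pv.2 = qw.2

/-- Satisfaction of one transformation-constraint-shaped triple by another: embeddings of the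
first two components, a respectful embedding of the third, whose common underlying maps give
an isomorphism of the unions of the graphs. -/
def TCSatisfies (le : Set (L × L)) (s s' : TConstraint V A L) : Prop :=
  ∃ fv fa,
    IsEmbedding le s.pa s'.pa fv fa ∧ fv s.ca = s'.ca ∧
    IsEmbedding le s.pb s'.pb fv fa ∧ fv s.cb = s'.cb ∧
    RespectfulEmbedding le s.Pc s'.Pc fv fa ∧
    IsEmbedding le ((s.pa ∪ s.pb) ∪ pGraph s.Pc) ((s'.pa ∪ s'.pb) ∪ pGraph s'.Pc) fv fa

/-- A transformation constraint for an encoding described by `(Ds, Ds', P'')`. -/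
def IsTransformationConstraint (Ds Ds' : Set (DTree V A L))
    (P'' : Set (PreGraph V A L × V)) (s : TConstraint V A L) : Prop :=
  (s.pa, s.ca) ∈ PatternsOf Ds ∧ (s.pb, s.cb) ∈ PatternsOf Ds' ∧ s.Pc ⊆ P''

/-- A constraint assignment for `Δ` and `Δ'`: a partial function (modelled with `Option`) on
pairs of vertices (paths) whose values are transformation constraints from `S0` matched by the
corresponding labels. -/
def IsConstraintAssignment (leR leR' : Set (L × L)) (S0 : Set (TConstraint V A L))
    (Δ Δ' : DTree V A L) (Lm : List ℕ → List ℕ → Option (TConstraint V A L)) : Prop :=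
  ∀ pi pi' s, Lm pi pi' = some s → s ∈ S0 ∧
    (∃ δ, subtreeAt pi Δ = some δ ∧
        MatchesPattern leR δ.rootGraph δ.rootTok s.pa s.ca) ∧
    (∃ δ', subtreeAt pi' Δ' = some δ' ∧
        MatchesPattern leR' δ'.rootGraph δ'.rootTok s.pb s.cb)

/-- The constraint assignment `Lm` is satisfied by the pair of decompositions `(D, D')`
(whose vertices correspond, via the shape-preserving matchings, to those of `Δ`, `Δ'`). -/
def LSatisfiedBy (leI : Set (L × L)) (Ip : CSpace V A L)
    (Lm : List ℕ → List ℕ → Option (TConstraint V A L)) (D D' : DTree V A L) : Prop :=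
  ∀ pi pi' s d d', Lm pi pi' = some s →
    subtreeAt pi D = some d → subtreeAt pi' D' = some d' →
    ∃ Cset : Set (PreGraph V A L × V),
      (∀ pv ∈ Cset, IsConstruction Ip pv.1 pv.2) ∧
      TCSatisfies leI ⟨d.rootGraph, d.rootTok, d'.rootGraph, d'.rootTok, Cset⟩ s

/-- `(g', t')` is a structural `L`-transformation of `(g, t)` (with respect to the pattern
decompositions `Δ`, `Δ'` for the universal spaces `Ru`, `Ru'` and the inter-property
identification space `Ip`). -/
def IsStructuralLTransformation (Ru Ru' Ip : CSpace V A L) (Δ Δ' : DTree V A L)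
    (Lm : List ℕ → List ℕ → Option (TConstraint V A L))
    (g : PreGraph V A L) (t : V) (g' : PreGraph V A L) (t' : V) : Prop :=
  (∃ D, IsDecompositionOf Ru D g t ∧ DecompositionMatches Ru.le D Δ) ∧
  (∃ D', IsDecompositionOf Ru' D' g' t' ∧ DecompositionMatches Ru'.le D' Δ') ∧
  ∀ D D', IsDecompositionOf Ru D g t → DecompositionMatches Ru.le D Δ →
    IsDecompositionOf Ru' D' g' t' → DecompositionMatches Ru'.le D' Δ' →
    LSatisfiedBy Ip.le Ip Lm D D'

/-- Partial satisfaction: the constraint is only checked at vertices of the pattern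
decomposition `Δh` whose label is already a construction in `Ru'`. -/
def LPartialSatisfiedBy (leI : Set (L × L)) (Ip Ru' : CSpace V A L)
    (Lm : List ℕ → List ℕ → Option (TConstraint V A L)) (D Δh : DTree V A L) : Prop :=
  ∀ pi pi' s d δh, Lm pi pi' = some s →
    subtreeAt pi D = some d → subtreeAt pi' Δh = some δh →
    IsConstructionIn Ru' δh.rootGraph δh.rootTok →
    ∃ Cset : Set (PreGraph V A L × V),
      (∀ pv ∈ Cset, IsConstruction Ip pv.1 pv.2) ∧
      TCSatisfies leI ⟨d.rootGraph, d.rootTok, δh.rootGraph, δh.rootTok, Cset⟩ s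

/-- The pattern `(ph, vh)` (a construction in the pattern space `Ps'` for `Ru'`) is a partial
`L`-transformation of the construction `(g, t)`. -/
def IsPartialLTransformation (Ru Ru' Ip Ps' : CSpace V A L) (Δ Δ' : DTree V A L)
    (Lm : List ℕ → List ℕ → Option (TConstraint V A L))
    (g : PreGraph V A L) (t : V) (ph : PreGraph V A L) (vh : V) : Prop :=
  (∃ D, IsDecompositionOf Ru D g t ∧ DecompositionMatches Ru.le D Δ) ∧
  (∃ Δh, IsDecompositionOf Ps' Δh ph vh ∧ DecompositionMatches Ru'.le Δh Δ') ∧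
  ∀ D Δh, IsDecompositionOf Ru D g t → DecompositionMatches Ru.le D Δ →
    IsDecompositionOf Ps' Δh ph vh → DecompositionMatches Ru'.le Δh Δ' →
    LPartialSatisfiedBy Ip.le Ip Ru' Lm D Δh

/-! ## Validity, soundness, leaf instantiation -/

/-- Validity of `Lm` for `(g, t)` and `(p, v)` at the pair of vertices `(pi, pi')`. -/
def ValidAt (Ru Ru' Ip Ps' : CSpace V A L) (Δ Δ' : DTree V A L)
    (Lm : List ℕ → List ℕ → Option (TConstraint V A L))
    (g : PreGraph V A L) (t : V) (p : PreGraph V A L) (v : V)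
    (pi pi' : List ℕ) : Prop :=
  ∀ D Δh Dsub Δhsub Δsub Δsub',
    IsDecompositionOf Ru D g t → DecompositionMatches Ru.le D Δ →
    IsDecompositionOf Ps' Δh p v → DecompositionMatches Ru'.le Δh Δ' →
    subtreeAt pi D = some Dsub → subtreeAt pi' Δh = some Δhsub →
    subtreeAt pi Δ = some Δsub → subtreeAt pi' Δ' = some Δsub' →
    IsConstructionIn Ru' Δhsub.ctGraph Δhsub.rootTok →
    IsStructuralLTransformation Ru Ru' Ip Δsub Δsub'
      (fun σ σ' => Lm (pi ++ σ) (pi' ++ σ'))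
      Dsub.ctGraph Dsub.rootTok Δhsub.ctGraph Δhsub.rootTok

/-- Ancestor-validity: validity at every pair of proper descendants-in-the-tree
("ancestors" in the paper's in-tree terminology). -/
def AncestorValidAt (Ru Ru' Ip Ps' : CSpace V A L) (Δ Δ' : DTree V A L)
    (Lm : List ℕ → List ℕ → Option (TConstraint V A L))
    (g : PreGraph V A L) (t : V) (p : PreGraph V A L) (v : V)
    (pi pi' : List ℕ) : Prop :=
  ∀ σ σ' : List ℕ, σ ≠ [] → σ' ≠ [] →
    (∃ d, subtreeAt (pi ++ σ) Δ = some d) → (∃ d', subtreeAt (pi' ++ σ') Δ' = some d') →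
    ValidAt Ru Ru' Ip Ps' Δ Δ' Lm g t p v (pi ++ σ) (pi' ++ σ')

/-- Soundness of a constraint assignment. -/
def SoundAssignment (Ru Ru' Ip Ps' : CSpace V A L) (Δ Δ' : DTree V A L)
    (Lm : List ℕ → List ℕ → Option (TConstraint V A L)) : Prop :=
  ∀ g t, IsConstructionIn Ru g t →
    (∃ D, IsDecompositionOf Ru D g t ∧ DecompositionMatches Ru.le D Δ) →
    ∀ p v, IsConstruction Ps' p v →
      (∃ Δh, IsDecompositionOf Ps' Δh p v ∧ DecompositionMatches Ru'.le Δh Δ') →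
      ∀ pi pi', (∃ d, subtreeAt pi Δ = some d) → (∃ d', subtreeAt pi' Δ' = some d') →
        AncestorValidAt Ru Ru' Ip Ps' Δ Δ' Lm g t p v pi pi' →
        ValidAt Ru Ru' Ip Ps' Δ Δ' Lm g t p v pi pi'

/-- The pattern `(p, v)` leaf-instantiates `Δ'`: it matches `Δ'` and every leaf of its
`Δ'`-canonical decomposition is labelled by a construction in `Ru'`. -/
def LeafInstantiates (Ru' Ps' : CSpace V A L) (Δ' : DTree V A L)
    (p : PreGraph V A L) (v : V) : Prop :=
  (∃ Δh, IsDecompositionOf Ps' Δh p v ∧ DecompositionMatches Ru'.le Δh Δ') ∧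
  ∀ Δh, IsDecompositionOf Ps' Δh p v → DecompositionMatches Ru'.le Δh Δ' →
    ∀ pi δh, subtreeAt pi Δh = some δh → δh.kids = [] →
      IsConstructionIn Ru' δh.rootGraph δh.rootTok

/-- A complete extension of a pattern `(p, v)` that leaf-instantiates `Δ'`. -/
def CompleteExtension (Ru' Ps' : CSpace V A L) (Δ' : DTree V A L)
    (p : PreGraph V A L) (v : V) (g' : PreGraph V A L) (t' : V) : Prop :=
  IsConstructionIn Ru' g' t' ∧
  ∃ fv fa, IsEmbedding Ru'.le g' p fv fa ∧ fv t' = v ∧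
    ∀ Δh, IsDecompositionOf Ps' Δh p v → DecompositionMatches Ru'.le Δh Δ' →
      ∀ pi δh, subtreeAt pi Δh = some δh → δh.kids = [] →
        ∀ x ∈ δh.rootGraph.Tk, x ∈ g'.Tk ∧ fv x = x

/-- `(g, t)` and `(p, v)` are valid at the leaves of `Δ` and `Δ'`. -/
def ValidAtLeaves (Ru Ru' Ip Ps' : CSpace V A L) (Δ Δ' : DTree V A L)
    (Lm : List ℕ → List ℕ → Option (TConstraint V A L))
    (g : PreGraph V A L) (t : V) (p : PreGraph V A L) (v : V) : Prop :=
  ∀ pi pi' δ δ', subtreeAt pi Δ = some δ → subtreeAt pi' Δ' = some δ' →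
    δ.kids = [] → δ'.kids = [] →
    ValidAt Ru Ru' Ip Ps' Δ Δ' Lm g t p v pi pi'


section Transport

variable {V A L : Type*}

lemma PreGraph.ext' {g h : PreGraph V A L} (h1 : g.Tk = h.Tk) (h2 : g.Cf = h.Cf)
    (h3 : g.Arr = h.Arr) (h4 : g.inc = h.inc) (h5 : g.ia = h.ia) (h6 : g.tl = h.tl)
    (h7 : g.cl = h.cl) : g = h := by
  cases g; cases h; simp_all

lemma Subgraph.trans {a b c : PreGraph V A L} (h1 : a.Subgraph b) (h2 : b.Subgraph c) :
    a.Subgraph c := by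
  obtain ⟨t1,t2,t3,t4,t5,t6,t7⟩ := h1
  obtain ⟨s1,s2,s3,s4,s5,s6,s7⟩ := h2
  exact ⟨t1.trans s1, t2.trans s2, t3.trans s3, t4.trans s4, t5.trans s5, t6.trans s6,
    t7.trans s7⟩

lemma restrict_subgraph (g : PreGraph V A L) (Vs : Set V) (As : Set A) :
    (g.restrict Vs As).Subgraph g := by
  refine ⟨?_, ?_, ?_, ?_, ?_, ?_, ?_⟩ <;> intro x hx <;>
    first | exact hx.1 | exact hx.1

lemma trGraph_subgraph (g : PreGraph V A L) (TR : List (Trail V A)) :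
    (trGraph g TR).Subgraph g := restrict_subgraph g _ _

/-- A context bundling an embedding between two graphs, together with graph facts and
transitivity of the subtype relation. -/
structure Ctx (V A L : Type*) where
  le : Set (L × L)
  g : PreGraph V A L
  p : PreGraph V A L
  fv : V → V
  fa : A → A
  hg : IsGraph g
  hp : IsGraph p
  he : IsEmbedding le g p fv fa
  hle : ∀ a b c, (a, b) ∈ le → (b, c) ∈ le → (a, c) ∈ le

namespace Ctx

variable (E : Ctx V A L)

lemma tkMap : ∀ x ∈ E.g.Tk, E.fv x ∈ E.p.Tk := E.he.1
lemma cfMap : ∀ x ∈ E.g.Cf, E.fv x ∈ E.p.Cf := E.he.2.1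
lemma vInj : ∀ x ∈ E.g.Tk ∪ E.g.Cf, ∀ y ∈ E.g.Tk ∪ E.g.Cf, E.fv x = E.fv y → x = y :=
  E.he.2.2.1
lemma tkSurj : ∀ y ∈ E.p.Tk, ∃ x ∈ E.g.Tk, E.fv x = y := E.he.2.2.2.1
lemma cfSurj : ∀ y ∈ E.p.Cf, ∃ x ∈ E.g.Cf, E.fv x = y := E.he.2.2.2.2.1
lemma aMap : ∀ a ∈ E.g.Arr, E.fa a ∈ E.p.Arr := E.he.2.2.2.2.2.1
lemma aInj : ∀ a ∈ E.g.Arr, ∀ b ∈ E.g.Arr, E.fa a = E.fa b → a = b := E.he.2.2.2.2.2.2.1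
lemma aSurj : ∀ b ∈ E.p.Arr, ∃ a ∈ E.g.Arr, E.fa a = b := E.he.2.2.2.2.2.2.2.1
lemma incMap : ∀ a v w, (a, (v, w)) ∈ E.g.inc → (E.fa a, (E.fv v, E.fv w)) ∈ E.p.inc :=
  E.he.2.2.2.2.2.2.2.2.1
lemma iaMap : ∀ a n, (a, n) ∈ E.g.ia → (E.fa a, n) ∈ E.p.ia := E.he.2.2.2.2.2.2.2.2.2.1
lemma clMap : ∀ u c, (u, c) ∈ E.g.cl → (E.fv u, c) ∈ E.p.cl := E.he.2.2.2.2.2.2.2.2.2.2.1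
lemma tlMap : ∀ x τ, (x, τ) ∈ E.g.tl → ∃ σ, (E.fv x, σ) ∈ E.p.tl ∧ (τ, σ) ∈ E.le :=
  E.he.2.2.2.2.2.2.2.2.2.2.2

lemma vMap : ∀ x ∈ E.g.Tk ∪ E.g.Cf, E.fv x ∈ E.p.Tk ∪ E.p.Cf := by
  rintro x (hx | hx)
  · exact Or.inl (E.tkMap x hx)
  · exact Or.inr (E.cfMap x hx)

lemma vSurj : ∀ y ∈ E.p.Tk ∪ E.p.Cf, ∃ x ∈ E.g.Tk ∪ E.g.Cf, E.fv x = y := by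
  rintro y (hy | hy)
  · obtain ⟨x, hx, hfx⟩ := E.tkSurj y hy; exact ⟨x, Or.inl hx, hfx⟩
  · obtain ⟨x, hx, hfx⟩ := E.cfSurj y hy; exact ⟨x, Or.inr hx, hfx⟩

open Classical in
noncomputable def gv (y : V) : V :=
  if h : ∃ x ∈ E.g.Tk ∪ E.g.Cf, E.fv x = y then h.choose else y

open Classical in
noncomputable def ga (b : A) : A :=
  if h : ∃ a ∈ E.g.Arr, E.fa a = b then h.choose else b

lemma gv_fv {x : V} (hx : x ∈ E.g.Tk ∪ E.g.Cf) : E.gv (E.fv x) = x := by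
  have h : ∃ x' ∈ E.g.Tk ∪ E.g.Cf, E.fv x' = E.fv x := ⟨x, hx, rfl⟩
  rw [gv, dif_pos h]
  exact E.vInj _ h.choose_spec.1 _ hx h.choose_spec.2

lemma gv_mem {y : V} (hy : y ∈ E.p.Tk ∪ E.p.Cf) : E.gv y ∈ E.g.Tk ∪ E.g.Cf := by
  obtain ⟨x, hx, rfl⟩ := E.vSurj y hy
  rw [E.gv_fv hx]; exact hx

lemma fv_gv {y : V} (hy : y ∈ E.p.Tk ∪ E.p.Cf) : E.fv (E.gv y) = y := by
  obtain ⟨x, hx, rfl⟩ := E.vSurj y hy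
  rw [E.gv_fv hx]

lemma ga_fa {a : A} (ha : a ∈ E.g.Arr) : E.ga (E.fa a) = a := by
  have h : ∃ a' ∈ E.g.Arr, E.fa a' = E.fa a := ⟨a, ha, rfl⟩
  rw [ga, dif_pos h]
  exact E.aInj _ h.choose_spec.1 _ ha h.choose_spec.2

lemma ga_mem {b : A} (hb : b ∈ E.p.Arr) : E.ga b ∈ E.g.Arr := by
  obtain ⟨a, ha, rfl⟩ := E.aSurj b hb
  rw [E.ga_fa ha]; exact ha

lemma fa_ga {b : A} (hb : b ∈ E.p.Arr) : E.fa (E.ga b) = b := by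
  obtain ⟨a, ha, rfl⟩ := E.aSurj b hb
  rw [E.ga_fa ha]

/-- The pullback of a subgraph of `p` along the embedding. -/
def pb (q : PreGraph V A L) : PreGraph V A L :=
  ⟨{x | x ∈ E.g.Tk ∧ E.fv x ∈ q.Tk}, {x | x ∈ E.g.Cf ∧ E.fv x ∈ q.Cf},
   {a | a ∈ E.g.Arr ∧ E.fa a ∈ q.Arr},
   {r | r ∈ E.g.inc ∧ E.fa r.1 ∈ q.Arr},
   {r | r ∈ E.g.ia ∧ E.fa r.1 ∈ q.Arr},
   {r | r ∈ E.g.tl ∧ E.fv r.1 ∈ q.Tk},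
   {r | r ∈ E.g.cl ∧ E.fv r.1 ∈ q.Cf}⟩

lemma pb_subgraph (q : PreGraph V A L) : (E.pb q).Subgraph E.g := by
  refine ⟨?_, ?_, ?_, ?_, ?_, ?_, ?_⟩ <;> intro x hx <;> exact hx.1

lemma pb_mono {q r : PreGraph V A L} (h : q.Subgraph r) : (E.pb q).Subgraph (E.pb r) := by
  obtain ⟨t1,t2,t3,t4,t5,t6,t7⟩ := h
  refine ⟨?_, ?_, ?_, ?_, ?_, ?_, ?_⟩ <;> intro x hx
  · exact ⟨hx.1, t1 hx.2⟩
  · exact ⟨hx.1, t2 hx.2⟩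
  · exact ⟨hx.1, t3 hx.2⟩
  · exact ⟨hx.1, t3 hx.2⟩
  · exact ⟨hx.1, t3 hx.2⟩
  · exact ⟨hx.1, t1 hx.2⟩
  · exact ⟨hx.1, t2 hx.2⟩

lemma pb_p_eq_g : E.pb E.p = E.g := by
  refine PreGraph.ext' ?_ ?_ ?_ ?_ ?_ ?_ ?_ <;> apply Set.eq_of_subset_of_subset <;>
    intro x hx
  · exact hx.1
  · exact ⟨hx, E.tkMap x hx⟩
  · exact hx.1
  · exact ⟨hx, E.cfMap x hx⟩
  · exact hx.1
  · exact ⟨hx, E.aMap x hx⟩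
  · exact hx.1
  · exact ⟨hx, E.aMap _ (E.hg.2.1.1 _ hx)⟩
  · exact hx.1
  · exact ⟨hx, E.aMap _ (E.hg.2.2.2.1.1 _ hx)⟩
  · exact hx.1
  · exact ⟨hx, E.tkMap _ (E.hg.2.2.2.2.1.1 _ hx)⟩
  · exact hx.1
  · exact ⟨hx, E.cfMap _ (E.hg.2.2.2.2.2.1 _ hx)⟩

end Ctx

end Transport
lemma funOn_unique {α β : Type*} {R : Set (α × β)} {D : Set α} (h : IsFunctionOn R D)
    {x : α} {y1 y2 : β} (hx : x ∈ D) (h1 : (x, y1) ∈ R) (h2 : (x, y2) ∈ R) : y1 = y2 := by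
  obtain ⟨y, -, hy⟩ := h.2 x hx
  rw [hy y1 h1, hy y2 h2]

namespace Ctx

variable (E : Ctx V A L) {q : PreGraph V A L}

lemma inc_transfer (hq : IsGraph q) (hqp : q.Subgraph E.p) {a : A} {x y : V}
    (h : (a, (x, y)) ∈ E.g.inc) (ha : E.fa a ∈ q.Arr) :
    (E.fa a, (E.fv x, E.fv y)) ∈ q.inc := by
  obtain ⟨yz, hyz, -⟩ := hq.2.1.2 (E.fa a) ha
  have h1 : (E.fa a, yz) ∈ E.p.inc := hqp.2.2.2.1 hyz
  have h2 : (E.fa a, (E.fv x, E.fv y)) ∈ E.p.inc := E.incMap a x y h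
  have : yz = (E.fv x, E.fv y) :=
    funOn_unique E.hp.2.1 (hqp.2.2.1 ha) h1 h2
  rwa [this] at hyz

lemma inc_reflect (hq : IsGraph q) (hqp : q.Subgraph E.p) {b : A} {y z : V}
    (h : (b, (y, z)) ∈ q.inc) :
    ∃ a x1 x2, (a, (x1, x2)) ∈ E.g.inc ∧ a ∈ E.g.Arr ∧ E.fa a = b ∧
      E.fv x1 = y ∧ E.fv x2 = z := by
  have hb : b ∈ q.Arr := hq.2.1.1 _ h
  obtain ⟨a, ha, rfl⟩ := E.aSurj b (hqp.2.2.1 hb)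
  obtain ⟨⟨x1, x2⟩, hinc, -⟩ := E.hg.2.1.2 a ha
  have h2 : (E.fa a, (E.fv x1, E.fv x2)) ∈ E.p.inc := E.incMap a x1 x2 hinc
  have : (y, z) = (E.fv x1, E.fv x2) :=
    funOn_unique E.hp.2.1 (E.aMap a ha) (hqp.2.2.2.1 h) h2
  exact ⟨a, x1, x2, hinc, ha, rfl, (congrArg Prod.fst this).symm, (congrArg Prod.snd this).symm⟩

lemma ia_transfer (hq : IsGraph q) (hqp : q.Subgraph E.p) {a : A} {n : ℕ}
    (h : (a, n) ∈ E.g.ia) (ha : E.fa a ∈ q.Arr) : (E.fa a, n) ∈ q.ia := by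
  obtain ⟨m, hm, -⟩ := hq.2.2.2.1.2 (E.fa a) ha
  have : m = n :=
    funOn_unique E.hp.2.2.2.1 (hqp.2.2.1 ha) (hqp.2.2.2.2.1 hm) (E.iaMap a n h)
  rwa [this] at hm

lemma ia_reflect (hqp : q.Subgraph E.p) {a : A} {n : ℕ} (ha : a ∈ E.g.Arr)
    (h : (E.fa a, n) ∈ q.ia) : (a, n) ∈ E.g.ia := by
  obtain ⟨m, hm, -⟩ := E.hg.2.2.2.1.2 a ha
  have : n = m :=
    funOn_unique E.hp.2.2.2.1 (E.aMap a ha) (hqp.2.2.2.2.1 h) (E.iaMap a m hm)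
  rwa [this]

lemma tl_transfer (hq : IsGraph q) (hqp : q.Subgraph E.p) {x : V} {τ : L}
    (h : (x, τ) ∈ E.g.tl) (hx : E.fv x ∈ q.Tk) :
    ∃ σ, (E.fv x, σ) ∈ q.tl ∧ (τ, σ) ∈ E.le := by
  obtain ⟨σ, hσ, -⟩ := hq.2.2.2.2.1.2 (E.fv x) hx
  obtain ⟨σ', hσ', hle⟩ := E.tlMap x τ h
  have : σ = σ' :=
    funOn_unique E.hp.2.2.2.2.1 (hqp.1 hx) (hqp.2.2.2.2.2.1 hσ) hσ'
  exact ⟨σ, hσ, this ▸ hle⟩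

lemma cl_transfer (hq : IsGraph q) (hqp : q.Subgraph E.p) {u : V} {c : L}
    (h : (u, c) ∈ E.g.cl) (hu : E.fv u ∈ q.Cf) : (E.fv u, c) ∈ q.cl := by
  obtain ⟨c', hc', -⟩ := hq.2.2.2.2.2.2 (E.fv u) hu
  have : c' = c :=
    funOn_unique E.hp.2.2.2.2.2 (hqp.2.1 hu) (hqp.2.2.2.2.2.2 hc') (E.clMap u c h)
  rwa [this] at hc'

lemma pb_isGraph (hq : IsGraph q) (hqp : q.Subgraph E.p) : IsGraph (E.pb q) := by
  refine ⟨?_, ⟨?_, ?_⟩, ?_, ⟨?_, ?_⟩, ⟨?_, ?_⟩, ⟨?_, ?_⟩⟩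
  · exact Set.disjoint_left.2 fun x hx hx' => Set.disjoint_left.1 E.hg.1 hx.1 hx'.1
  · exact fun r hr => ⟨E.hg.2.1.1 _ hr.1, hr.2⟩
  · intro a ha
    obtain ⟨y, hy, hy'⟩ := E.hg.2.1.2 a ha.1
    exact ⟨y, ⟨hy, ha.2⟩, fun z hz => hy' z hz.1⟩
  · rintro a v w h
    rcases E.hg.2.2.1 a v w h.1 with ⟨hv, hw⟩ | ⟨hv, hw⟩
    · have := E.inc_transfer hq hqp h.1 h.2
      rcases hq.2.2.1 _ _ _ this with ⟨h1, h2⟩ | ⟨h1, h2⟩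
      · exact Or.inl ⟨⟨hv, h1⟩, ⟨hw, h2⟩⟩
      · exact absurd (hqp.2.1 h1) (Set.disjoint_left.1 E.hp.1 (E.tkMap v hv))
    · have := E.inc_transfer hq hqp h.1 h.2
      rcases hq.2.2.1 _ _ _ this with ⟨h1, h2⟩ | ⟨h1, h2⟩
      · exact absurd (hqp.1 h1) fun hh => Set.disjoint_left.1 E.hp.1 hh (E.cfMap v hv)
      · exact Or.inr ⟨⟨hv, h1⟩, ⟨hw, h2⟩⟩
  · exact fun r hr => ⟨E.hg.2.2.2.1.1 _ hr.1, hr.2⟩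
  · intro a ha
    obtain ⟨n, hn, hn'⟩ := E.hg.2.2.2.1.2 a ha.1
    exact ⟨n, ⟨hn, ha.2⟩, fun m hm => hn' m hm.1⟩
  · exact fun r hr => ⟨E.hg.2.2.2.2.1.1 _ hr.1, hr.2⟩
  · intro x hx
    obtain ⟨τ, hτ, hτ'⟩ := E.hg.2.2.2.2.1.2 x hx.1
    exact ⟨τ, ⟨hτ, hx.2⟩, fun σ hσ => hτ' σ hσ.1⟩
  · exact fun r hr => ⟨E.hg.2.2.2.2.2.1 _ hr.1, hr.2⟩
  · intro u hu
    obtain ⟨c, hc, hc'⟩ := E.hg.2.2.2.2.2.2 u hu.1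
    exact ⟨c, ⟨hc, hu.2⟩, fun c' hc'' => hc' c' hc''.1⟩

lemma emb_pb (hq : IsGraph q) (hqp : q.Subgraph E.p) :
    IsEmbedding E.le (E.pb q) q E.fv E.fa := by
  refine ⟨fun x hx => hx.2, fun x hx => hx.2, ?_, ?_, ?_, fun a ha => ha.2, ?_, ?_,
    ?_, ?_, ?_, ?_⟩
  · rintro x hx y hy h
    refine E.vInj x ?_ y ?_ h
    · rcases hx with hx | hx
      exacts [Or.inl hx.1, Or.inr hx.1]
    · rcases hy with hy | hy
      exacts [Or.inl hy.1, Or.inr hy.1]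
  · intro y hy
    obtain ⟨x, hx, rfl⟩ := E.tkSurj y (hqp.1 hy)
    exact ⟨x, ⟨hx, hy⟩, rfl⟩
  · intro y hy
    obtain ⟨x, hx, rfl⟩ := E.cfSurj y (hqp.2.1 hy)
    exact ⟨x, ⟨hx, hy⟩, rfl⟩
  · rintro a ha b hb h
    exact E.aInj a ha.1 b hb.1 h
  · intro b hb
    obtain ⟨a, ha, rfl⟩ := E.aSurj b (hqp.2.2.1 hb)
    exact ⟨a, ⟨ha, hb⟩, rfl⟩
  · exact fun a v w h => E.inc_transfer hq hqp h.1 h.2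
  · exact fun a n h => E.ia_transfer hq hqp h.1 h.2
  · exact fun u c h => E.cl_transfer hq hqp h.1 h.2
  · exact fun x τ h => E.tl_transfer hq hqp h.1 h.2

end Ctx
namespace Ctx

variable (E : Ctx V A L) {q : PreGraph V A L}

lemma mem_verts_of_inc {a : A} {x y : V} (h : (a, (x, y)) ∈ E.g.inc) :
    x ∈ E.g.Tk ∪ E.g.Cf ∧ y ∈ E.g.Tk ∪ E.g.Cf := by
  rcases E.hg.2.2.1 a x y h with ⟨h1, h2⟩ | ⟨h1, h2⟩
  · exact ⟨Or.inl h1, Or.inr h2⟩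
  · exact ⟨Or.inr h1, Or.inl h2⟩

lemma adj_pb (hq : IsGraph q) (hqp : q.Subgraph E.p) {u x : V}
    (hu : u ∈ E.g.Tk ∪ E.g.Cf) (hx : x ∈ E.g.Tk ∪ E.g.Cf) :
    x ∈ (E.pb q).adjTo u ↔ E.fv x ∈ q.adjTo (E.fv u) := by
  simp only [PreGraph.adjTo, Set.mem_union, Set.mem_singleton_iff, Set.mem_setOf_eq]
  constructor
  · rintro (rfl | ⟨a, ha, hcase | hcase⟩)
    · exact Or.inl rfl
    · exact Or.inr ⟨E.fa a, ha.2, Or.inl (E.inc_transfer hq hqp hcase.1 hcase.2)⟩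
    · exact Or.inr ⟨E.fa a, ha.2, Or.inr (E.inc_transfer hq hqp hcase.1 hcase.2)⟩
  · rintro (h | ⟨b, hb, hcase | hcase⟩)
    · exact Or.inl (E.vInj x hx u hu h)
    · obtain ⟨a, x1, x2, hinc, haG, hfab, h1, h2⟩ := E.inc_reflect hq hqp hcase
      obtain ⟨hm1, hm2⟩ := E.mem_verts_of_inc hinc
      have e1 : x1 = x := E.vInj x1 hm1 x hx h1
      have e2 : x2 = u := E.vInj x2 hm2 u hu h2
      subst e1; subst e2
      exact Or.inr ⟨a, ⟨haG, hfab ▸ hb⟩, Or.inl ⟨hinc, hfab ▸ hb⟩⟩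
    · obtain ⟨a, x1, x2, hinc, haG, hfab, h1, h2⟩ := E.inc_reflect hq hqp hcase
      obtain ⟨hm1, hm2⟩ := E.mem_verts_of_inc hinc
      have e1 : x1 = u := E.vInj x1 hm1 u hu h1
      have e2 : x2 = x := E.vInj x2 hm2 x hx h2
      subst e1; subst e2
      exact Or.inr ⟨a, ⟨haG, hfab ▸ hb⟩, Or.inr ⟨hinc, hfab ▸ hb⟩⟩

lemma incArr_pb (hq : IsGraph q) (hqp : q.Subgraph E.p) {u : V} {a : A}
    (hu : u ∈ E.g.Tk ∪ E.g.Cf) (haG : a ∈ E.g.Arr) (haq : E.fa a ∈ q.Arr) :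
    a ∈ (E.pb q).incidentArrows u ↔ E.fa a ∈ q.incidentArrows (E.fv u) := by
  simp only [PreGraph.incidentArrows, Set.mem_setOf_eq]
  constructor
  · rintro ⟨-, v, hcase | hcase⟩
    · exact ⟨haq, E.fv v, Or.inl (E.inc_transfer hq hqp hcase.1 hcase.2)⟩
    · exact ⟨haq, E.fv v, Or.inr (E.inc_transfer hq hqp hcase.1 hcase.2)⟩
  · rintro ⟨-, w, hcase | hcase⟩
    · obtain ⟨a', x1, x2, hinc, haG', hfab, h1, h2⟩ := E.inc_reflect hq hqp hcase
      have : a' = a := E.aInj a' haG' a haG hfab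
      subst this
      obtain ⟨hm1, hm2⟩ := E.mem_verts_of_inc hinc
      have e2 : x2 = u := E.vInj x2 hm2 u hu h2
      subst e2
      exact ⟨⟨haG, haq⟩, x1, Or.inl ⟨hinc, haq⟩⟩
    · obtain ⟨a', x1, x2, hinc, haG', hfab, h1, h2⟩ := E.inc_reflect hq hqp hcase
      have : a' = a := E.aInj a' haG' a haG hfab
      subst this
      obtain ⟨hm1, hm2⟩ := E.mem_verts_of_inc hinc
      have e1 : x1 = u := E.vInj x1 hm1 u hu h1
      subst e1
      exact ⟨⟨haG, haq⟩, x2, Or.inr ⟨hinc, haq⟩⟩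

lemma Nh_pb (hq : IsGraph q) (hqp : q.Subgraph E.p) {u : V} (hu : u ∈ E.g.Tk ∪ E.g.Cf) :
    (E.pb q).Nh u = E.pb (q.Nh (E.fv u)) := by
  refine PreGraph.ext' ?_ ?_ ?_ ?_ ?_ ?_ ?_ <;> ext r
  · constructor
    · rintro ⟨⟨h1, h2⟩, h3⟩
      exact ⟨h1, h2, (E.adj_pb hq hqp hu (Or.inl h1)).1 h3⟩
    · rintro ⟨h1, h2, h3⟩
      exact ⟨⟨h1, h2⟩, (E.adj_pb hq hqp hu (Or.inl h1)).2 h3⟩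
  · constructor
    · rintro ⟨⟨h1, h2⟩, h3⟩
      exact ⟨h1, h2, (E.adj_pb hq hqp hu (Or.inr h1)).1 h3⟩
    · rintro ⟨h1, h2, h3⟩
      exact ⟨⟨h1, h2⟩, (E.adj_pb hq hqp hu (Or.inr h1)).2 h3⟩
  · constructor
    · rintro ⟨⟨h1, h2⟩, h3⟩
      exact ⟨h1, h2, (E.incArr_pb hq hqp hu h1 h2).1 h3⟩
    · rintro ⟨h1, h2, h3⟩
      exact ⟨⟨h1, h2⟩, (E.incArr_pb hq hqp hu h1 h2).2 h3⟩
  · constructor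
    · rintro ⟨⟨h1, h2⟩, h3⟩
      exact ⟨h1, h2, (E.incArr_pb hq hqp hu (E.hg.2.1.1 _ h1) h2).1 h3⟩
    · rintro ⟨h1, h2, h3⟩
      exact ⟨⟨h1, h2⟩, (E.incArr_pb hq hqp hu (E.hg.2.1.1 _ h1) h2).2 h3⟩
  · constructor
    · rintro ⟨⟨h1, h2⟩, h3⟩
      exact ⟨h1, h2, (E.incArr_pb hq hqp hu (E.hg.2.2.2.1.1 _ h1) h2).1 h3⟩
    · rintro ⟨h1, h2, h3⟩
      exact ⟨⟨h1, h2⟩, (E.incArr_pb hq hqp hu (E.hg.2.2.2.1.1 _ h1) h2).2 h3⟩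
  · constructor
    · rintro ⟨⟨h1, h2⟩, h3⟩
      exact ⟨h1, h2, (E.adj_pb hq hqp hu (Or.inl (E.hg.2.2.2.2.1.1 _ h1))).1 h3⟩
    · rintro ⟨h1, h2, h3⟩
      exact ⟨⟨h1, h2⟩, (E.adj_pb hq hqp hu (Or.inl (E.hg.2.2.2.2.1.1 _ h1))).2 h3⟩
  · constructor
    · rintro ⟨⟨h1, h2⟩, h3⟩
      exact ⟨h1, h2, (E.adj_pb hq hqp hu (Or.inr (E.hg.2.2.2.2.2.1 _ h1))).1 h3⟩
    · rintro ⟨h1, h2, h3⟩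
      exact ⟨⟨h1, h2⟩, (E.adj_pb hq hqp hu (Or.inr (E.hg.2.2.2.2.2.1 _ h1))).2 h3⟩

lemma inArrowSeq_pb (hq : IsGraph q) (hqp : q.Subgraph E.p) {u : V} {ars' : List A}
    (hu : u ∈ E.g.Tk ∪ E.g.Cf) (h : InArrowSeq q (E.fv u) ars') :
    InArrowSeq (E.pb q) u (ars'.map E.ga) := by
  obtain ⟨hnd, hiff, hidx⟩ := h
  have harsq : ∀ b ∈ ars', b ∈ q.Arr := fun b hb => ((hiff b).1 hb).1
  refine ⟨?_, ?_, ?_⟩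
  · refine hnd.map_on ?_
    intro b1 h1 b2 h2 hgab
    have e1 := E.fa_ga (hqp.2.2.1 (harsq b1 h1))
    have e2 := E.fa_ga (hqp.2.2.1 (harsq b2 h2))
    rw [← e1, ← e2, hgab]
  · intro a
    constructor
    · intro ha
      obtain ⟨b, hb, rfl⟩ := List.mem_map.1 ha
      obtain ⟨hbq, w', hinc⟩ := (hiff b).1 hb
      obtain ⟨a', x1, x2, hinc', haG, hfab, h1, h2⟩ := E.inc_reflect hq hqp hinc
      obtain ⟨hm1, hm2⟩ := E.mem_verts_of_inc hinc'
      have e2 : x2 = u := E.vInj x2 hm2 u hu h2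
      subst e2
      have : E.ga b = a' := by rw [← hfab, E.ga_fa haG]
      rw [this]
      exact ⟨⟨haG, hfab ▸ hbq⟩, x1, hinc', hfab ▸ hbq⟩
    · rintro ⟨⟨haG, haq⟩, w, hinc, -⟩
      have : E.fa a ∈ ars' := (hiff (E.fa a)).2 ⟨haq, E.fv w,
        E.inc_transfer hq hqp hinc haq⟩
      have := List.mem_map_of_mem (f := E.ga) this
      rwa [E.ga_fa haG] at this
  · intro i a ha
    rw [List.getElem?_map] at ha
    cases hb : ars'[i]? with
    | none => rw [hb] at ha; simp at ha
    | some b =>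
      rw [hb] at ha
      simp only [Option.map_some] at ha
      obtain rfl : E.ga b = a := by injection ha
      have hbars : b ∈ ars' := by
        have := List.getElem?_eq_some_iff.1 hb
        obtain ⟨hlt, hbeq⟩ := this
        exact hbeq ▸ List.getElem_mem _
      have hbq : b ∈ q.Arr := harsq b hbars
      have hiaq : (b, i + 1) ∈ q.ia := hidx i b hb
      have hgaG : E.ga b ∈ E.g.Arr := E.ga_mem (hqp.2.2.1 hbq)
      have hfga : E.fa (E.ga b) = b := E.fa_ga (hqp.2.2.1 hbq)
      refine ⟨E.ia_reflect hqp hgaG ?_, ?_⟩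
      · rw [hfga]; exact hiaq
      · show E.fa (E.ga b) ∈ q.Arr
        rw [hfga]; exact hbq

end Ctx
namespace Ctx

variable (E : Ctx V A L) {q : PreGraph V A L}

lemma cl_reflect (hqp : q.Subgraph E.p) {u : V} {c : L} (hu : u ∈ E.g.Cf)
    (h : (E.fv u, c) ∈ q.cl) : (u, c) ∈ E.g.cl := by
  obtain ⟨c', hc', -⟩ := E.hg.2.2.2.2.2.2 u hu
  have : c = c' :=
    funOn_unique E.hp.2.2.2.2.2 (E.cfMap u hu) (hqp.2.2.2.2.2.2 h) (E.clMap u c' hc')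
  rwa [this]

lemma gv_tk (hqp : q.Subgraph E.p) {y : V} (hy : y ∈ q.Tk) : E.gv y ∈ (E.pb q).Tk := by
  have hyp : y ∈ E.p.Tk := hqp.1 hy
  have hmem := E.gv_mem (Or.inl hyp)
  have hfv : E.fv (E.gv y) = y := E.fv_gv (Or.inl hyp)
  rcases hmem with hm | hm
  · refine ⟨hm, ?_⟩
    rw [hfv]; exact hy
  · exfalso
    have : E.fv (E.gv y) ∈ E.p.Cf := E.cfMap _ hm
    rw [hfv] at this
    exact Set.disjoint_left.1 E.hp.1 hyp this

lemma gv_cf (hqp : q.Subgraph E.p) {y : V} (hy : y ∈ q.Cf) : E.gv y ∈ (E.pb q).Cf := by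
  have hyp : y ∈ E.p.Cf := hqp.2.1 hy
  have hmem := E.gv_mem (Or.inr hyp)
  have hfv : E.fv (E.gv y) = y := E.fv_gv (Or.inr hyp)
  rcases hmem with hm | hm
  · exfalso
    have : E.fv (E.gv y) ∈ E.p.Tk := E.tkMap _ hm
    rw [hfv] at this
    exact Set.disjoint_left.1 E.hp.1 this hyp
  · refine ⟨hm, ?_⟩
    rw [hfv]; exact hy

lemma isConfiguration_pb (hq : IsGraph q) (hqp : q.Subgraph E.p) {u : V} {c : L}
    {ins : List L} {out : L} (hu : u ∈ E.g.Cf)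
    (hconf : IsConfiguration E.le (q.Nh (E.fv u)) (E.fv u) c ins out) :
    IsConfiguration E.le (E.pb (q.Nh (E.fv u))) u c ins out := by
  set r := q.Nh (E.fv u) with hr
  have hrp : r.Subgraph E.p := Subgraph.trans (restrict_subgraph q _ _) hqp
  obtain ⟨hrG, hrCf, hrcl, hrTk, hout, houtc, ars', hseq, hlen, hcond⟩ := hconf
  have huv : u ∈ E.g.Tk ∪ E.g.Cf := Or.inr hu
  refine ⟨E.pb_isGraph hrG hrp, ?_, ?_, ?_, ?_, ?_, ?_⟩
  · ext x
    constructor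
    · rintro ⟨hx, hfx⟩
      rw [hrCf] at hfx
      exact E.vInj x (Or.inr hx) u huv hfx
    · rintro rfl
      exact ⟨hu, hrCf ▸ rfl⟩
  · refine ⟨E.cl_reflect hrp hu hrcl, ?_⟩
    rw [hrCf]; rfl
  · ext x
    constructor
    · rintro ⟨hx, hfx⟩
      rw [hrTk] at hfx
      obtain ⟨b, hb, hcase⟩ := hfx
      rcases hcase with hinc | hinc
      · obtain ⟨a, x1, x2, hinc', haG, hfab, h1, h2⟩ := E.inc_reflect hrG hrp hinc
        obtain ⟨hm1, hm2⟩ := E.mem_verts_of_inc hinc'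
        have e1 : x1 = x := E.vInj x1 hm1 x (Or.inl hx) h1
        have e2 : x2 = u := E.vInj x2 hm2 u huv h2
        subst e1; subst e2
        exact ⟨a, ⟨haG, hfab ▸ hb⟩, Or.inl ⟨hinc', hfab ▸ hb⟩⟩
      · obtain ⟨a, x1, x2, hinc', haG, hfab, h1, h2⟩ := E.inc_reflect hrG hrp hinc
        obtain ⟨hm1, hm2⟩ := E.mem_verts_of_inc hinc'
        have e1 : x1 = u := E.vInj x1 hm1 u huv h1
        have e2 : x2 = x := E.vInj x2 hm2 x (Or.inl hx) h2
        subst e1; subst e2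
        exact ⟨a, ⟨haG, hfab ▸ hb⟩, Or.inr ⟨hinc', hfab ▸ hb⟩⟩
    · rintro ⟨a, ha, hcase | hcase⟩
      · have hxTk : x ∈ E.g.Tk := by
          rcases E.hg.2.2.1 _ _ _ hcase.1 with ⟨h1, h2⟩ | ⟨h1, h2⟩
          · exact h1
          · exact absurd h2 (Set.disjoint_left.1 E.hg.1.symm hu)
        refine ⟨hxTk, hrTk ▸ ⟨E.fa a, ha.2, Or.inl (E.inc_transfer hrG hrp hcase.1 hcase.2)⟩⟩
      · have hxTk : x ∈ E.g.Tk := by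
          rcases E.hg.2.2.1 _ _ _ hcase.1 with ⟨h1, h2⟩ | ⟨h1, h2⟩
          · exact absurd h1 (Set.disjoint_left.1 E.hg.1.symm hu)
          · exact h2
        refine ⟨hxTk, hrTk ▸ ⟨E.fa a, ha.2, Or.inr (E.inc_transfer hrG hrp hcase.1 hcase.2)⟩⟩
  · obtain ⟨a0', ⟨ha0r, w', hw'⟩, huniq⟩ := hout
    obtain ⟨a, x1, x2, hinc', haG, hfab, h1, h2⟩ := E.inc_reflect hrG hrp hw'
    obtain ⟨hm1, hm2⟩ := E.mem_verts_of_inc hinc'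
    have e1 : x1 = u := E.vInj x1 hm1 u huv h1
    subst e1
    refine ⟨a, ⟨⟨haG, hfab ▸ ha0r⟩, x2, hinc', hfab ▸ ha0r⟩, ?_⟩
    rintro a1 ⟨⟨ha1G, ha1q⟩, w1, hw1, -⟩
    have := huniq (E.fa a1) ⟨ha1q, E.fv w1, E.inc_transfer hrG hrp hw1 ha1q⟩
    exact E.aInj a1 ha1G a haG (by rw [this, hfab])
  · rintro a0 ⟨ha0G, ha0q⟩ w ⟨hinc, -⟩
    obtain ⟨hia, σ', hσ', hσout⟩ :=
      houtc (E.fa a0) ha0q (E.fv w) (E.inc_transfer hrG hrp hinc ha0q)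
    have hwTk : w ∈ E.g.Tk := by
      rcases E.hg.2.2.1 _ _ _ hinc with ⟨h1, h2⟩ | ⟨h1, h2⟩
      · exact absurd h1 (Set.disjoint_left.1 E.hg.1.symm hu)
      · exact h2
    obtain ⟨τ, hτ, -⟩ := E.hg.2.2.2.2.1.2 w hwTk
    obtain ⟨σ2, hσ2, hle2⟩ := E.tlMap w τ hτ
    have : σ' = σ2 :=
      funOn_unique E.hp.2.2.2.2.1 (E.tkMap w hwTk) (hrp.2.2.2.2.2.1 hσ') hσ2
    refine ⟨⟨E.ia_reflect hrp ha0G hia, ha0q⟩, τ, ⟨hτ, hrG.2.2.2.2.1.1 _ hσ'⟩,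
      E.hle τ σ' out (this ▸ hle2) hσout⟩
  · refine ⟨ars'.map E.ga, E.inArrowSeq_pb hrG hrp huv hseq, by simpa using hlen, ?_⟩
    intro i a τ ha hτ
    rw [List.getElem?_map] at ha
    cases hb : ars'[i]? with
    | none => rw [hb] at ha; simp at ha
    | some b =>
      rw [hb] at ha
      simp only [Option.map_some] at ha
      obtain rfl : E.ga b = a := by injection ha
      obtain ⟨w', σ, hwinc, hwtl, hστ⟩ := hcond i b τ hb hτ
      obtain ⟨a', x1, x2, hinc', haG, hfab, h1, h2⟩ := E.inc_reflect hrG hrp hwinc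
      obtain ⟨hm1, hm2⟩ := E.mem_verts_of_inc hinc'
      have e2 : x2 = u := E.vInj x2 hm2 u huv h2
      subst e2
      have hbq : b ∈ r.Arr := hrG.2.1.1 _ hwinc
      have egab : E.ga b = a' := by rw [← hfab, E.ga_fa haG]
      have hx1Tk : x1 ∈ E.g.Tk := by
        rcases E.hg.2.2.1 _ _ _ hinc' with ⟨hh1, hh2⟩ | ⟨hh1, hh2⟩
        · exact hh1
        · exact absurd hh2 (Set.disjoint_left.1 E.hg.1.symm hu)
      obtain ⟨τ1, hτ1, -⟩ := E.hg.2.2.2.2.1.2 x1 hx1Tk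
      obtain ⟨σ2, hσ2, hle2⟩ := E.tlMap x1 τ1 hτ1
      have hσeq : σ = σ2 := by
        rw [← h1] at hwtl
        exact funOn_unique E.hp.2.2.2.2.1 (E.tkMap x1 hx1Tk) (hrp.2.2.2.2.2.1 hwtl) hσ2
      refine ⟨x1, τ1, ?_, ?_, E.hle τ1 σ τ (hσeq ▸ hle2) hστ⟩
      · rw [egab]
        exact ⟨hinc', hfab ▸ hbq⟩
      · refine ⟨hτ1, ?_⟩
        rw [h1]
        exact hrG.2.2.2.2.1.1 _ hwtl
end Ctx
namespace Ctx

variable (E : Ctx V A L) {q : PreGraph V A L}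

lemma isStructureGraph_pb (hqp : q.Subgraph E.p) {Ty C : Set L}
    {sig : Set (L × (List L × L))} (hsgq : IsStructureGraph Ty E.le C sig q)
    (hgty : ∀ x τ, (x, τ) ∈ E.g.tl → τ ∈ Ty) :
    IsStructureGraph Ty E.le C sig (E.pb q) := by
  obtain ⟨hqG, hqty, hqcf⟩ := hsgq
  refine ⟨E.pb_isGraph hqG hqp, fun x τ h => hgty x τ h.1, ?_⟩
  rintro u ⟨huG, huq⟩
  obtain ⟨c, ins, out, hcl, hcC, hcsig, hconf⟩ := hqcf (E.fv u) huq
  refine ⟨c, ins, out, ⟨E.cl_reflect hqp huG hcl, huq⟩, hcC, hcsig, ?_⟩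
  rw [E.Nh_pb hqG hqp (Or.inr huG)]
  exact E.isConfiguration_pb hqG hqp huG hconf

lemma chain_arrows_mem {l : List A} {s t : V} (h : ChainIn q l s t) : ∀ a ∈ l, a ∈ q.Arr := by
  induction l generalizing s with
  | nil => intro a ha; simp at ha
  | cons b l ih =>
    obtain ⟨hb, m, hinc, hch⟩ := h
    intro a ha
    rcases List.mem_cons.1 ha with rfl | ha
    · exact hb
    · exact ih hch a ha

lemma chainIn_pb (hq : IsGraph q) (hqp : q.Subgraph E.p) {l : List A} {s t : V}
    (h : ChainIn q l s t) (hs : s ∈ E.p.Tk ∪ E.p.Cf) :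
    ChainIn (E.pb q) (l.map E.ga) (E.gv s) (E.gv t) := by
  induction l generalizing s with
  | nil => exact congrArg E.gv h
  | cons b l ih =>
    obtain ⟨hb, m, hinc, hch⟩ := h
    obtain ⟨a, x1, x2, hinc', haG, hfab, h1, h2⟩ := E.inc_reflect hq hqp hinc
    obtain ⟨hm1, hm2⟩ := E.mem_verts_of_inc hinc'
    have egab : E.ga b = a := by rw [← hfab, E.ga_fa haG]
    have hgs : E.gv s = x1 := by rw [← h1, E.gv_fv hm1]
    have hbq : b ∈ q.Arr := hq.2.1.1 _ hinc
    have hfaq : E.fa a ∈ q.Arr := by rw [hfab]; exact hbq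
    rw [List.map_cons, egab]
    refine ⟨⟨haG, hfaq⟩, x2, ?_, ?_⟩
    · rw [hgs]
      exact ⟨hinc', hfaq⟩
    · have hmp : m ∈ E.p.Tk ∪ E.p.Cf := by
        rw [← h2]; exact E.vMap x2 hm2
      have := ih hch hmp
      rw [← h2, E.gv_fv hm2] at this
      exact this

lemma isTrailIn_pb (hq : IsGraph q) (hqp : q.Subgraph E.p) {tr : Trail V A}
    (h : IsTrailIn q tr) : IsTrailIn (E.pb q) (Trail.map E.gv E.ga tr) := by
  obtain ⟨hnd, hch, hsrc, htgt⟩ := h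
  have harr : ∀ a ∈ tr.arrows, a ∈ q.Arr := chain_arrows_mem hch
  have hverts : ∀ y, y ∈ q.Tk ∪ q.Cf → E.gv y ∈ (E.pb q).Tk ∪ (E.pb q).Cf := by
    rintro y (hy | hy)
    · exact Or.inl (E.gv_tk hqp hy)
    · exact Or.inr (E.gv_cf hqp hy)
  have hsp : tr.src ∈ E.p.Tk ∪ E.p.Cf := by
    rcases hsrc with hy | hy
    · exact Or.inl (hqp.1 hy)
    · exact Or.inr (hqp.2.1 hy)
  refine ⟨?_, E.chainIn_pb hq hqp hch hsp, hverts _ hsrc, hverts _ htgt⟩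
  refine hnd.map_on ?_
  intro b1 h1 b2 h2 hgab
  have e1 := E.fa_ga (hqp.2.2.1 (harr b1 h1))
  have e2 := E.fa_ga (hqp.2.2.1 (harr b2 h2))
  rw [← e1, ← e2, hgab]

lemma isConstruction_pb {Cs : CSpace V A L} {tg : V}
    (hEle : E.le = Cs.le) (hgCs : IsConstruction Cs E.g tg)
    (hqp : q.Subgraph E.p) {w : V}
    (hq1 : q.Subgraph E.p) (hqsg : IsStructureGraph Cs.Ty Cs.le Cs.C Cs.sig q)
    (hquni : UniStructured q) (hwTk : w ∈ q.Tk)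
    (hconn : ∀ v ∈ q.Tk ∪ q.Cf, ∃ tr : Trail V A, IsTrailIn q tr ∧ tr.src = v ∧ tr.tgt = w) :
    IsConstruction Cs (E.pb q) (E.gv w) := by
  refine ⟨Subgraph.trans (E.pb_subgraph q) hgCs.1, ?_, ?_, ?_, ?_, ?_, ?_, ?_⟩
  · rw [← hEle] at hqsg ⊢
    exact E.isStructureGraph_pb hqp hqsg (fun x τ h => hgCs.2.1.2.1 x τ h)
  · exact hgCs.2.2.1.subset fun x hx => hx.1
  · exact hgCs.2.2.2.1.subset fun x hx => hx.1
  · exact hgCs.2.2.2.2.1.subset fun x hx => hx.1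
  · intro x hx a ha b hb h1 h2
    obtain ⟨w1, hw1⟩ := h1
    obtain ⟨w2, hw2⟩ := h2
    exact hgCs.2.2.2.2.2.1 x hx.1 a ha.1 b hb.1 ⟨w1, hw1.1⟩ ⟨w2, hw2.1⟩
  · exact E.gv_tk hqp hwTk
  · intro x hx
    have hfx : E.fv x ∈ q.Tk ∪ q.Cf := by
      rcases hx with hx | hx
      · exact Or.inl hx.2
      · exact Or.inr hx.2
    obtain ⟨tr, htr, hsrc, htgt⟩ := hconn (E.fv x) hfx
    have hxg : x ∈ E.g.Tk ∪ E.g.Cf := by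
      rcases hx with hx | hx
      · exact Or.inl hx.1
      · exact Or.inr hx.1
    refine ⟨Trail.map E.gv E.ga tr, E.isTrailIn_pb hqsg.1 hqp htr, ?_, ?_⟩
    · show E.gv tr.src = x
      rw [hsrc, E.gv_fv hxg]
    · show E.gv tr.tgt = E.gv w
      rw [htgt]

end Ctx
lemma getElem?_mem' {α : Type*} {l : List α} {i : ℕ} {a : α} (h : l[i]? = some a) :
    a ∈ l := by
  obtain ⟨hlt, hbeq⟩ := List.getElem?_eq_some_iff.1 h
  exact hbeq ▸ List.getElem_mem _

namespace Ctx

variable (E : Ctx V A L) {q : PreGraph V A L}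

lemma tes_pb (hq : IsGraph q) (hqp : q.Subgraph E.p) {tr : Trail V A}
    {S : List (Trail V A)} (h : TES q tr S) :
    ∀ (_ : ∀ a ∈ tr.arrows, a ∈ q.Arr) (_ : tr.src ∈ q.Tk ∪ q.Cf),
    TES (E.pb q) (Trail.map E.gv E.ga tr) (S.map (Trail.map E.gv E.ga)) := by
  induction h with
  | nonext tr hne =>
    intro harr hsrc
    have hsp : tr.src ∈ E.p.Tk ∪ E.p.Cf := by
      rcases hsrc with hy | hy
      · exact Or.inl (hqp.1 hy)
      · exact Or.inr (hqp.2.1 hy)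
    have hne' : NonExtendable (E.pb q) (Trail.map E.gv E.ga tr) := by
      rintro ⟨a, ⟨haG, haq⟩, hnotin, s, hincs⟩
      refine hne ⟨E.fa a, ⟨haq, ?_, E.fv s, ?_⟩⟩
      · intro hmem
        have : E.ga (E.fa a) ∈ (Trail.map E.gv E.ga tr).arrows :=
          List.mem_map_of_mem (f := E.ga) hmem
        rw [E.ga_fa haG] at this
        exact hnotin this
      · have := E.inc_transfer hq hqp hincs.1 hincs.2
        rwa [show E.fv ((Trail.map E.gv E.ga tr).src) = tr.src from E.fv_gv hsp] at this
    exact TES.nonext (Trail.map E.gv E.ga tr) hne'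
  | ext tr a u ars Ss hext hinc hars hlen hrec ih =>
    intro harr hsrc
    have hsp : tr.src ∈ E.p.Tk ∪ E.p.Cf := by
      rcases hsrc with hy | hy
      · exact Or.inl (hqp.1 hy)
      · exact Or.inr (hqp.2.1 hy)
    have haq : a ∈ q.Arr := hext.1
    obtain ⟨a0, x1, x2, hinc0, ha0G, hfa0, h1, h2⟩ := E.inc_reflect hq hqp hinc
    obtain ⟨hm1, hm2⟩ := E.mem_verts_of_inc hinc0
    have egaa : E.ga a = a0 := by rw [← hfa0, E.ga_fa ha0G]
    have hfa0q : E.fa a0 ∈ q.Arr := by rw [hfa0]; exact haq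
    have hx2 : x2 = E.gv tr.src := by rw [← h2, E.gv_fv hm2]
    have hext' : ExtendableBy (E.pb q) (Trail.map E.gv E.ga tr) (E.ga a) := by
      refine ⟨?_, ?_, x1, ?_⟩
      · rw [egaa]; exact ⟨ha0G, hfa0q⟩
      · intro hmem
        obtain ⟨b, hb, hgab⟩ := List.mem_map.1 hmem
        have hbq : b ∈ q.Arr := harr b hb
        have : b = a := by
          have := congrArg E.fa hgab
          rwa [E.fa_ga (hqp.2.2.1 hbq), E.fa_ga (hqp.2.2.1 haq)] at this
        exact hext.2.1 (this ▸ hb)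
      · rw [egaa]
        show (a0, (x1, E.gv tr.src)) ∈ (E.pb q).inc
        rw [← hx2]
        exact ⟨hinc0, hfa0q⟩
    have hinc' : (E.ga a, (x1, (Trail.map E.gv E.ga tr).src)) ∈ (E.pb q).inc := by
      rw [egaa]
      show (a0, (x1, E.gv tr.src)) ∈ (E.pb q).inc
      rw [← hx2]
      exact ⟨hinc0, hfa0q⟩
    have hars' : InArrowSeq (E.pb q) x1 (ars.map E.ga) := by
      have := E.inArrowSeq_pb hq hqp hm1 (h1 ▸ hars)
      exact this
    have hlen' : (Ss.map (List.map (Trail.map E.gv E.ga))).length = (ars.map E.ga).length := by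
      simpa using hlen
    have hrec' : ∀ (i : ℕ) (ai : A) (si : V) (Si : List (Trail V A)),
        (ars.map E.ga)[i]? = some ai → (Ss.map (List.map (Trail.map E.gv E.ga)))[i]? = some Si →
        (ai, (si, x1)) ∈ (E.pb q).inc →
        TES (E.pb q) ⟨ai :: E.ga a :: (Trail.map E.gv E.ga tr).arrows, si,
          (Trail.map E.gv E.ga tr).tgt⟩ Si := by
      intro i ai si Si hai hSi hsi
      rw [List.getElem?_map] at hai hSi
      cases hb : ars[i]? with
      | none => rw [hb] at hai; simp at hai
      | some bi =>
        rw [hb] at hai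
        simp only [Option.map_some] at hai
        obtain rfl : E.ga bi = ai := by injection hai
        cases hS : Ss[i]? with
        | none => rw [hS] at hSi; simp at hSi
        | some Si0 =>
          rw [hS] at hSi
          simp only [Option.map_some] at hSi
          obtain rfl : Si0.map (Trail.map E.gv E.ga) = Si := by injection hSi
          have hbiq : bi ∈ q.Arr := ((hars.2.1 bi).1 (getElem?_mem' hb)).1
          have hfgabi : E.fa (E.ga bi) = bi := E.fa_ga (hqp.2.2.1 hbiq)
          have htr : (bi, (E.fv si, u)) ∈ q.inc := by
            have := E.inc_transfer hq hqp hsi.1 hsi.2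
            rwa [hfgabi, h1] at this
          obtain ⟨hmsi, -⟩ := E.mem_verts_of_inc hsi.1
          have hinner := ih i bi (E.fv si) Si0 hb hS htr ?_ ?_
          · have : Trail.map E.gv E.ga ⟨bi :: a :: tr.arrows, E.fv si, tr.tgt⟩ =
                ⟨E.ga bi :: E.ga a :: (Trail.map E.gv E.ga tr).arrows, si,
                  (Trail.map E.gv E.ga tr).tgt⟩ := by
              simp [Trail.map, E.gv_fv hmsi]
            rwa [this] at hinner
          · intro b hbmem
            rcases List.mem_cons.1 hbmem with rfl | hbmem
            · exact hbiq
            rcases List.mem_cons.1 hbmem with rfl | hbmem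
            · exact haq
            · exact harr b hbmem
          · rcases hq.2.2.1 _ _ _ htr with ⟨hh1, hh2⟩ | ⟨hh1, hh2⟩
            · exact Or.inl hh1
            · exact Or.inr hh1
    have key := TES.ext (g := E.pb q) (Trail.map E.gv E.ga tr) (E.ga a) x1
      (ars.map E.ga) (Ss.map (List.map (Trail.map E.gv E.ga))) hext' hinc' hars' hlen' hrec'
    have hhead : ∀ (bi : A) (Si : List (Trail V A)),
        (Si.map (Trail.map E.gv E.ga)).map
          (fun e => (⟨e.arrows ++ [E.ga bi, E.ga a], e.src,
            (Trail.map E.gv E.ga tr).src⟩ : Trail V A)) =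
        (Si.map (fun e => (⟨e.arrows ++ [bi, a], e.src, tr.src⟩ : Trail V A))).map
          (Trail.map E.gv E.ga) := by
      intro bi Si
      rw [List.map_map, List.map_map]
      congr 1
      funext e
      simp [Trail.map, List.map_append]
    have heq : ∀ (l1 : List A) (l2 : List (List (Trail V A))),
        List.flatten (List.zipWith
          (fun (ai : A) (Si : List (Trail V A)) =>
            Si.map fun e => (⟨e.arrows ++ [ai, E.ga a], e.src,
              (Trail.map E.gv E.ga tr).src⟩ : Trail V A))
          (l1.map E.ga) (l2.map (List.map (Trail.map E.gv E.ga)))) =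
        (List.flatten (List.zipWith
          (fun (ai : A) (Si : List (Trail V A)) =>
            Si.map fun e => (⟨e.arrows ++ [ai, a], e.src, tr.src⟩ : Trail V A))
          l1 l2)).map (Trail.map E.gv E.ga) := by
      intro l1
      induction l1 with
      | nil => intro l2; simp
      | cons x xs ihl =>
        intro l2
        cases l2 with
        | nil => simp
        | cons y ys =>
          simp only [List.map_cons, List.zipWith_cons_cons, List.flatten_cons,
            List.map_append]
          rw [ihl ys, hhead x y]
    rwa [heq ars Ss] at key

end Ctx
lemma zipWith_getElem?' {α β γ : Type*} (f : α → β → γ) :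
    ∀ (l1 : List α) (l2 : List β) (i : ℕ) (c : γ),
      (List.zipWith f l1 l2)[i]? = some c →
      ∃ a b, l1[i]? = some a ∧ l2[i]? = some b ∧ c = f a b := by
  intro l1
  induction l1 with
  | nil => intro l2 i c h; simp at h
  | cons x xs ih =>
    intro l2 i c h
    cases l2 with
    | nil => simp at h
    | cons y ys =>
      cases i with
      | zero =>
        simp only [List.zipWith_cons_cons, List.getElem?_cons_zero] at h ⊢
        exact ⟨x, y, rfl, rfl, (Option.some.injEq _ _ ▸ h).symm⟩
      | succ n =>
        simp only [List.zipWith_cons_cons, List.getElem?_cons_succ] at h ⊢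
        exact ih ys n c h

lemma tes_conds {V A L : Type*} {q : PreGraph V A L} (hq : IsGraph q) {tr : Trail V A}
    {S : List (Trail V A)} (h : TES q tr S) :
    ∀ (_ : ∀ a ∈ tr.arrows, a ∈ q.Arr) (_ : tr.src ∈ q.Tk ∪ q.Cf),
    ∀ e ∈ S, (∀ a ∈ e.arrows, a ∈ q.Arr) ∧ e.src ∈ q.Tk ∪ q.Cf := by
  induction h with
  | nonext tr hne =>
    intro harr hsrc e he
    rcases List.mem_singleton.1 he with rfl
    exact ⟨fun a ha => absurd ha List.not_mem_nil, hsrc⟩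
  | ext tr a u ars Ss hext hinc hars hlen hrec ih =>
    intro harr hsrc e he
    obtain ⟨l, hl, hel⟩ := List.mem_flatten.1 he
    obtain ⟨i, hi⟩ := List.mem_iff_getElem?.1 hl
    obtain ⟨ai, Si, hai, hSi, rfl⟩ := zipWith_getElem?' _ _ _ _ _ hi
    obtain ⟨e', he', rfl⟩ := List.mem_map.1 hel
    have haiq : ai ∈ q.Arr ∧ ∃ w, (ai, (w, u)) ∈ q.inc := (hars.2.1 ai).1 (getElem?_mem' hai)
    obtain ⟨haiq', w, hw⟩ := haiq
    have hwverts : w ∈ q.Tk ∪ q.Cf := by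
      rcases hq.2.2.1 _ _ _ hw with ⟨h1, h2⟩ | ⟨h1, h2⟩
      · exact Or.inl h1
      · exact Or.inr h1
    have hinner := ih i ai w Si hai hSi hw ?_ ?_
    · obtain ⟨ha1, ha2⟩ := hinner e' he'
      refine ⟨?_, ha2⟩
      intro b hb
      rcases List.mem_append.1 hb with hb | hb
      · exact ha1 b hb
      rcases List.mem_cons.1 hb with rfl | hb
      · exact haiq'
      rcases List.mem_cons.1 hb with rfl | hb
      · exact hext.1
      · exact absurd hb List.not_mem_nil
    · intro b hb
      rcases List.mem_cons.1 hb with rfl | hb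
      · exact haiq'
      rcases List.mem_cons.1 hb with rfl | hb
      · exact hext.1
      · exact harr b hb
    · exact hwverts

namespace Ctx

variable (E : Ctx V A L) {q : PreGraph V A L}

lemma trailArrowSet_pb (hqp : q.Subgraph E.p) {S : List (Trail V A)}
    (hconds : ∀ e ∈ S, ∀ a ∈ e.arrows, a ∈ q.Arr) :
    trailArrowSet (S.map (Trail.map E.gv E.ga)) =
      {a | a ∈ E.g.Arr ∧ E.fa a ∈ trailArrowSet S} := by
  ext a
  constructor
  · rintro ⟨tr', htr', ha⟩
    obtain ⟨e, he, rfl⟩ := List.mem_map.1 htr'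
    obtain ⟨b, hb, rfl⟩ := List.mem_map.1 ha
    have hbq : b ∈ q.Arr := hconds e he b hb
    have hfa : E.fa (E.ga b) = b := E.fa_ga (hqp.2.2.1 hbq)
    refine ⟨E.ga_mem (hqp.2.2.1 hbq), ?_⟩
    rw [hfa]
    exact ⟨e, he, hb⟩
  · rintro ⟨haG, e, he, hb⟩
    refine ⟨Trail.map E.gv E.ga e, List.mem_map_of_mem he, ?_⟩
    have : E.ga (E.fa a) = a := E.ga_fa haG
    exact this ▸ List.mem_map_of_mem (f := E.ga) hb

lemma trailVertexSet_pb (hq : IsGraph q) (hqp : q.Subgraph E.p) {S : List (Trail V A)}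
    (hconds : ∀ e ∈ S, (∀ a ∈ e.arrows, a ∈ q.Arr) ∧ e.src ∈ q.Tk ∪ q.Cf) {x : V}
    (hx : x ∈ E.g.Tk ∪ E.g.Cf) :
    x ∈ trailVertexSet (E.pb q) (S.map (Trail.map E.gv E.ga)) ↔
      E.fv x ∈ trailVertexSet q S := by
  have harrset := E.trailArrowSet_pb hqp (fun e he => (hconds e he).1)
  constructor
  · rintro (⟨a, ha, w, hcase | hcase⟩ | ⟨tr', htr', hnil, hsrc⟩)
    · rw [harrset] at ha
      exact Or.inl ⟨E.fa a, ha.2, E.fv w,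
        Or.inl (E.inc_transfer hq hqp hcase.1 hcase.2)⟩
    · rw [harrset] at ha
      exact Or.inl ⟨E.fa a, ha.2, E.fv w,
        Or.inr (E.inc_transfer hq hqp hcase.1 hcase.2)⟩
    · obtain ⟨e, he, rfl⟩ := List.mem_map.1 htr'
      have henil : e.arrows = [] := by
        have : e.arrows.map E.ga = [] := hnil
        exact List.map_eq_nil_iff.1 this
      have hesrc : e.src ∈ q.Tk ∪ q.Cf := (hconds e he).2
      have : E.fv x = e.src := by
        rw [← hsrc]
        show E.fv (E.gv e.src) = e.src
        rcases hesrc with hy | hy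
        · exact E.fv_gv (Or.inl (hqp.1 hy))
        · exact E.fv_gv (Or.inr (hqp.2.1 hy))
      exact Or.inr ⟨e, he, henil, this.symm⟩
  · rintro (⟨b, hb, w', hcase | hcase⟩ | ⟨e, he, hnil, hsrc⟩)
    · obtain ⟨e, he, hbmem⟩ := hb
      have hbq : b ∈ q.Arr := (hconds e he).1 b hbmem
      obtain ⟨a, x1, x2, hinc', haG, hfab, h1, h2⟩ := E.inc_reflect hq hqp hcase
      obtain ⟨hm1, hm2⟩ := E.mem_verts_of_inc hinc'
      have e1 : x1 = x := E.vInj x1 hm1 x hx h1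
      subst e1
      have haset : a ∈ trailArrowSet (S.map (Trail.map E.gv E.ga)) := by
        rw [harrset]
        exact ⟨haG, hfab ▸ ⟨e, he, hbmem⟩⟩
      exact Or.inl ⟨a, haset, x2, Or.inl ⟨hinc', hfab ▸ hbq⟩⟩
    · obtain ⟨e, he, hbmem⟩ := hb
      have hbq : b ∈ q.Arr := (hconds e he).1 b hbmem
      obtain ⟨a, x1, x2, hinc', haG, hfab, h1, h2⟩ := E.inc_reflect hq hqp hcase
      obtain ⟨hm1, hm2⟩ := E.mem_verts_of_inc hinc'
      have e2 : x2 = x := E.vInj x2 hm2 x hx h2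
      subst e2
      have haset : a ∈ trailArrowSet (S.map (Trail.map E.gv E.ga)) := by
        rw [harrset]
        exact ⟨haG, hfab ▸ ⟨e, he, hbmem⟩⟩
      exact Or.inl ⟨a, haset, x1, Or.inr ⟨hinc', hfab ▸ hbq⟩⟩
    · refine Or.inr ⟨Trail.map E.gv E.ga e, List.mem_map_of_mem he, ?_, ?_⟩
      · show e.arrows.map E.ga = []
        rw [hnil]; rfl
      · show E.gv e.src = x
        rw [hsrc, E.gv_fv hx]

lemma trGraph_pb (hq : IsGraph q) (hqp : q.Subgraph E.p) {S : List (Trail V A)}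
    (hconds : ∀ e ∈ S, (∀ a ∈ e.arrows, a ∈ q.Arr) ∧ e.src ∈ q.Tk ∪ q.Cf) :
    trGraph (E.pb q) (S.map (Trail.map E.gv E.ga)) = E.pb (trGraph q S) := by
  have harrset := E.trailArrowSet_pb hqp (fun e he => (hconds e he).1)
  refine PreGraph.ext' ?_ ?_ ?_ ?_ ?_ ?_ ?_ <;> ext r
  · constructor
    · rintro ⟨⟨h1, h2⟩, h3⟩
      exact ⟨h1, h2, (E.trailVertexSet_pb hq hqp hconds (Or.inl h1)).1 h3⟩
    · rintro ⟨h1, h2, h3⟩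
      exact ⟨⟨h1, h2⟩, (E.trailVertexSet_pb hq hqp hconds (Or.inl h1)).2 h3⟩
  · constructor
    · rintro ⟨⟨h1, h2⟩, h3⟩
      exact ⟨h1, h2, (E.trailVertexSet_pb hq hqp hconds (Or.inr h1)).1 h3⟩
    · rintro ⟨h1, h2, h3⟩
      exact ⟨⟨h1, h2⟩, (E.trailVertexSet_pb hq hqp hconds (Or.inr h1)).2 h3⟩
  · constructor
    · rintro ⟨⟨h1, h2⟩, h3⟩
      rw [harrset] at h3
      exact ⟨h1, h2, h3.2⟩
    · rintro ⟨h1, h2, h3⟩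
      refine ⟨⟨h1, h2⟩, ?_⟩
      rw [harrset]
      exact ⟨h1, h3⟩
  · constructor
    · rintro ⟨⟨h1, h2⟩, h3⟩
      rw [harrset] at h3
      exact ⟨h1, h2, h3.2⟩
    · rintro ⟨h1, h2, h3⟩
      refine ⟨⟨h1, h2⟩, ?_⟩
      rw [harrset]
      exact ⟨E.hg.2.1.1 _ h1, h3⟩
  · constructor
    · rintro ⟨⟨h1, h2⟩, h3⟩
      rw [harrset] at h3
      exact ⟨h1, h2, h3.2⟩
    · rintro ⟨h1, h2, h3⟩
      refine ⟨⟨h1, h2⟩, ?_⟩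
      rw [harrset]
      exact ⟨E.hg.2.2.2.1.1 _ h1, h3⟩
  · constructor
    · rintro ⟨⟨h1, h2⟩, h3⟩
      exact ⟨h1, h2,
        (E.trailVertexSet_pb hq hqp hconds (Or.inl (E.hg.2.2.2.2.1.1 _ h1))).1 h3⟩
    · rintro ⟨h1, h2, h3⟩
      exact ⟨⟨h1, h2⟩,
        (E.trailVertexSet_pb hq hqp hconds (Or.inl (E.hg.2.2.2.2.1.1 _ h1))).2 h3⟩
  · constructor
    · rintro ⟨⟨h1, h2⟩, h3⟩
      exact ⟨h1, h2,
        (E.trailVertexSet_pb hq hqp hconds (Or.inr (E.hg.2.2.2.2.2.1 _ h1))).1 h3⟩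
    · rintro ⟨h1, h2, h3⟩
      exact ⟨⟨h1, h2⟩,
        (E.trailVertexSet_pb hq hqp hconds (Or.inr (E.hg.2.2.2.2.2.1 _ h1))).2 h3⟩

end Ctx
/-- The pullback of a decomposition tree. -/
noncomputable def Ctx.mapD (E : Ctx V A L) : DTree V A L → DTree V A L
  | .node q w cs => .node (E.pb q) (E.gv w) (cs.attach.map fun c => E.mapD c.1)
  termination_by δ => sizeOf δ
  decreasing_by
    simp only [DTree.node.sizeOf_spec]
    have := List.sizeOf_lt_of_mem c.2
    omega

namespace Ctx

variable (E : Ctx V A L)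

lemma mapD_eq (q : PreGraph V A L) (w : V) (cs : List (DTree V A L)) :
    E.mapD (.node q w cs) = .node (E.pb q) (E.gv w) (cs.map E.mapD) := by
  rw [mapD]
  congr 1
  rw [← List.attach_map_val (l := cs) (f := E.mapD)]

lemma mapD_rootTok (δ : DTree V A L) : (E.mapD δ).rootTok = E.gv δ.rootTok := by
  cases δ with
  | node q w cs => rw [mapD_eq]; rfl

lemma labelOf_mapD_fwd {δ : DTree V A L} {q : PreGraph V A L} {w : V}
    (h : LabelOf δ q w) : LabelOf (E.mapD δ) (E.pb q) (E.gv w) := by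
  induction h with
  | root g t cs => rw [mapD_eq]; exact LabelOf.root _ _ _
  | child g t cs c p' w' hc hl ih =>
    rw [mapD_eq]
    exact LabelOf.child _ _ _ (E.mapD c) _ _ (List.mem_map_of_mem hc) ih

lemma labelOf_mapD_rev : ∀ (δ : DTree V A L) (r : PreGraph V A L) (s : V),
    LabelOf (E.mapD δ) r s → ∃ q w, LabelOf δ q w ∧ r = E.pb q ∧ s = E.gv w
  | .node q w cs => by
    intro r s h
    rw [mapD_eq] at h
    cases h with
    | root => exact ⟨q, w, LabelOf.root _ _ _, rfl, rfl⟩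
    | child _ _ _ c _ _ hc hl =>
      obtain ⟨c0, hc0, rfl⟩ := List.mem_map.1 hc
      obtain ⟨q0, w0, hl0, rfl, rfl⟩ := labelOf_mapD_rev c0 _ _ hl
      exact ⟨q0, w0, LabelOf.child _ _ _ c0 _ _ hc0 hl0, rfl, rfl⟩
  termination_by δ => sizeOf δ
  decreasing_by
    simp only [DTree.node.sizeOf_spec]
    have := List.sizeOf_lt_of_mem hc0
    omega

lemma ctGraph_mapD (δ : DTree V A L) : (E.mapD δ).ctGraph = E.pb δ.ctGraph := by
  refine PreGraph.ext' ?_ ?_ ?_ ?_ ?_ ?_ ?_ <;> ext x <;> constructor <;>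
  first
  | (rintro ⟨r, s, hl, hx⟩
     obtain ⟨q0, w0, hl0, rfl, rfl⟩ := E.labelOf_mapD_rev _ _ _ hl
     exact ⟨hx.1, q0, w0, hl0, hx.2⟩)
  | (rintro ⟨hxg, r, s, hl, hx⟩
     exact ⟨E.pb r, E.gv s, E.labelOf_mapD_fwd hl, hxg, hx⟩)

end Ctx
lemma Subgraph.refl {V A L : Type*} (g : PreGraph V A L) : g.Subgraph g :=
  ⟨subset_rfl, subset_rfl, subset_rfl, subset_rfl, subset_rfl, subset_rfl, subset_rfl⟩

lemma isSplit_ics_sub {V A L : Type*} {Cs : CSpace V A L} {q : PreGraph V A L} {t : V}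
    {g' : PreGraph V A L} {ics : List (PreGraph V A L × V)} (h : IsSplit Cs q t g' ics)
    {i : ℕ} {gi : PreGraph V A L} {ti : V} (hi : ics[i]? = some (gi, ti)) :
    gi.Subgraph q := by
  obtain ⟨hcons, hsub, trs, htes, hlen, hidx⟩ := h
  have hi_lt : i < ics.length := (List.getElem?_eq_some_iff.1 hi).1
  have hlt : i < trs.length := hlen ▸ hi_lt
  obtain ⟨tri, htri⟩ : ∃ tri, trs[i]? = some tri :=
    ⟨trs[i], List.getElem?_eq_some_iff.2 ⟨hlt, rfl⟩⟩
  obtain ⟨Si, hSi, hics⟩ := hidx i tri htri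
  have : (gi, ti) = (trGraph q Si, tri.src) := Option.some.inj (hi.symm.trans hics)
  have := congrArg Prod.fst this
  simp only at this
  rw [this]
  exact trGraph_subgraph q Si

lemma decomp_rootTok {V A L : Type*} {Ps : CSpace V A L} {δ : DTree V A L}
    {q : PreGraph V A L} {w : V} (h : IsDecompositionOf Ps δ q w) : δ.rootTok = w := by
  cases h <;> rfl

namespace Ctx

variable (E : Ctx V A L)

lemma isConstruction_of_Ps {Cs Ps : CSpace V A L} (hTy : Ps.Ty = Cs.Ty)
    (hle2 : Ps.le = Cs.le) (hC : Ps.C = Cs.C) (hsig : Ps.sig = Cs.sig)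
    (hEle : E.le = Cs.le) {tg : V} (hgCs : IsConstruction Cs E.g tg)
    {q : PreGraph V A L} {w : V} (hqp : q.Subgraph E.p)
    (hc : IsConstruction Ps q w) : IsConstruction Cs (E.pb q) (E.gv w) := by
  have hsg : IsStructureGraph Cs.Ty Cs.le Cs.C Cs.sig q := by
    rw [← hTy, ← hle2, ← hC, ← hsig]; exact hc.2.1
  exact E.isConstruction_pb hEle hgCs hqp hqp hsg hc.2.2.2.2.2.1 hc.2.2.2.2.2.2.1
    hc.2.2.2.2.2.2.2

lemma labels_good {Ps : CSpace V A L} {δ : DTree V A L} {q : PreGraph V A L} {w : V}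
    (h : IsDecompositionOf Ps δ q w) :
    ∀ (_ : q.Subgraph E.p), ∀ r s, LabelOf δ r s → IsGraph r ∧ r.Subgraph E.p := by
  induction h with
  | single g t hc =>
    intro hqp r s hl
    cases hl with
    | root => exact ⟨hc.2.1.1, hqp⟩
    | child _ _ _ c _ _ hcmem _ => exact absurd hcmem List.not_mem_nil
  | split g t g' ics cs hc hsplit hlen hrec ih =>
    intro hqp r s hl
    cases hl with
    | root => exact ⟨hsplit.1.2.1.1, Subgraph.trans hsplit.2.1 hqp⟩
    | child _ _ _ c _ _ hcmem hlc =>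
      obtain ⟨i, hi⟩ := List.mem_iff_getElem?.1 hcmem
      have hilen : i < cs.length := (List.getElem?_eq_some_iff.1 hi).1
      have hlt : i < ics.length := hlen ▸ hilen
      obtain ⟨pr, hpr⟩ : ∃ pr, ics[i]? = some pr :=
        ⟨ics[i], List.getElem?_eq_some_iff.2 ⟨hlt, rfl⟩⟩
      obtain ⟨gi, ti⟩ := pr
      exact ih i c gi ti hi hpr
        (Subgraph.trans (isSplit_ics_sub hsplit hpr) hqp) r s hlc

lemma ctGraph_sub {δ : DTree V A L} (hlab : ∀ r s, LabelOf δ r s → r.Subgraph E.p) :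
    δ.ctGraph.Subgraph E.p := by
  refine ⟨?_, ?_, ?_, ?_, ?_, ?_, ?_⟩ <;> rintro x ⟨r, s, hl, hx⟩
  · exact (hlab r s hl).1 hx
  · exact (hlab r s hl).2.1 hx
  · exact (hlab r s hl).2.2.1 hx
  · exact (hlab r s hl).2.2.2.1 hx
  · exact (hlab r s hl).2.2.2.2.1 hx
  · exact (hlab r s hl).2.2.2.2.2.1 hx
  · exact (hlab r s hl).2.2.2.2.2.2 hx

lemma ctGraph_isGraph {δ : DTree V A L}
    (hlab : ∀ r s, LabelOf δ r s → IsGraph r ∧ r.Subgraph E.p) : IsGraph δ.ctGraph := by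
  have hsub : δ.ctGraph.Subgraph E.p := E.ctGraph_sub (fun r s hl => (hlab r s hl).2)
  refine ⟨?_, ⟨?_, ?_⟩, ?_, ⟨?_, ?_⟩, ⟨?_, ?_⟩, ⟨?_, ?_⟩⟩
  · exact Set.disjoint_left.2 fun x hx hx' =>
      Set.disjoint_left.1 E.hp.1 (hsub.1 hx) (hsub.2.1 hx')
  · rintro r ⟨q, w, hl, hr⟩
    exact ⟨q, w, hl, (hlab q w hl).1.2.1.1 _ hr⟩
  · rintro a ha
    obtain ⟨q, w, hl, ha'⟩ := ha
    obtain ⟨y, hy, -⟩ := (hlab q w hl).1.2.1.2 a ha'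
    refine ⟨y, ⟨q, w, hl, hy⟩, ?_⟩
    rintro z hz
    exact funOn_unique E.hp.2.1 (hsub.2.2.1 ⟨q, w, hl, ha'⟩) (hsub.2.2.2.1 hz)
      (hsub.2.2.2.1 ⟨q, w, hl, hy⟩)
  · rintro a v w ⟨q, s, hl, hinc⟩
    rcases (hlab q s hl).1.2.2.1 a v w hinc with ⟨h1, h2⟩ | ⟨h1, h2⟩
    · exact Or.inl ⟨⟨q, s, hl, h1⟩, ⟨q, s, hl, h2⟩⟩
    · exact Or.inr ⟨⟨q, s, hl, h1⟩, ⟨q, s, hl, h2⟩⟩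
  · rintro r ⟨q, w, hl, hr⟩
    exact ⟨q, w, hl, (hlab q w hl).1.2.2.2.1.1 _ hr⟩
  · rintro a ha
    obtain ⟨q, w, hl, ha'⟩ := ha
    obtain ⟨n, hn, -⟩ := (hlab q w hl).1.2.2.2.1.2 a ha'
    refine ⟨n, ⟨q, w, hl, hn⟩, ?_⟩
    rintro m hm
    exact funOn_unique E.hp.2.2.2.1 (hsub.2.2.1 ⟨q, w, hl, ha'⟩) (hsub.2.2.2.2.1 hm)
      (hsub.2.2.2.2.1 ⟨q, w, hl, hn⟩)
  · rintro r ⟨q, w, hl, hr⟩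
    exact ⟨q, w, hl, (hlab q w hl).1.2.2.2.2.1.1 _ hr⟩
  · rintro x hx
    obtain ⟨q, w, hl, hx'⟩ := hx
    obtain ⟨τ, hτ, -⟩ := (hlab q w hl).1.2.2.2.2.1.2 x hx'
    refine ⟨τ, ⟨q, w, hl, hτ⟩, ?_⟩
    rintro σ hσ
    exact funOn_unique E.hp.2.2.2.2.1 (hsub.1 ⟨q, w, hl, hx'⟩) (hsub.2.2.2.2.2.1 hσ)
      (hsub.2.2.2.2.2.1 ⟨q, w, hl, hτ⟩)
  · rintro r ⟨q, w, hl, hr⟩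
    exact ⟨q, w, hl, (hlab q w hl).1.2.2.2.2.2.1 _ hr⟩
  · rintro u hu
    obtain ⟨q, w, hl, hu'⟩ := hu
    obtain ⟨c, hc, -⟩ := (hlab q w hl).1.2.2.2.2.2.2 u hu'
    refine ⟨c, ⟨q, w, hl, hc⟩, ?_⟩
    rintro c2 hc2
    exact funOn_unique E.hp.2.2.2.2.2 (hsub.2.1 ⟨q, w, hl, hu'⟩) (hsub.2.2.2.2.2.2 hc2)
      (hsub.2.2.2.2.2.2 ⟨q, w, hl, hc⟩)

end Ctx
namespace Ctx

variable (E : Ctx V A L)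

lemma mapD_decomp {Cs Ps : CSpace V A L} (hTy : Ps.Ty = Cs.Ty) (hle2 : Ps.le = Cs.le)
    (hC : Ps.C = Cs.C) (hsig : Ps.sig = Cs.sig) (hEle : E.le = Cs.le) {tg : V}
    (hgCs : IsConstruction Cs E.g tg) {δ : DTree V A L} {q : PreGraph V A L} {w : V}
    (h : IsDecompositionOf Ps δ q w) :
    ∀ (_ : q.Subgraph E.p), IsDecompositionOf Cs (E.mapD δ) (E.pb q) (E.gv w) := by
  induction h with
  | single g t hc =>
    intro hqp
    rw [mapD_eq]
    exact IsDecompositionOf.single _ _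
      (E.isConstruction_of_Ps hTy hle2 hC hsig hEle hgCs hqp hc)
  | split g t g' ics cs hc hsplit hlen hrec ih =>
    intro hqp
    rw [mapD_eq]
    obtain ⟨hg'c, hg'sub, trs, htes, hlentrs, hidx⟩ := hsplit
    have hg'p : g'.Subgraph E.p := Subgraph.trans hg'sub hqp
    have hg'G : IsGraph g' := hg'c.2.1.1
    have hgG : IsGraph g := hc.2.1.1
    have htTk : t ∈ g'.Tk := hg'c.2.2.2.2.2.2.1
    have hnilarr : ∀ a ∈ (Trail.nil t : Trail V A).arrows, a ∈ g'.Arr := by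
      intro a ha
      simp [Trail.nil] at ha
    refine IsDecompositionOf.split _ _ _ (ics.map fun pr => (E.pb pr.1, E.gv pr.2)) _
      (E.isConstruction_of_Ps hTy hle2 hC hsig hEle hgCs hqp hc) ?_ (by simp [hlen]) ?_
    · refine ⟨E.isConstruction_of_Ps hTy hle2 hC hsig hEle hgCs hg'p hg'c,
        E.pb_mono hg'sub, trs.map (Trail.map E.gv E.ga), ?_, by simp [hlentrs], ?_⟩
      · have := E.tes_pb hg'G hg'p htes hnilarr (Or.inl htTk)
        exact this
      · intro i tri htri
        rw [List.getElem?_map] at htri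
        cases htr0 : trs[i]? with
        | none => rw [htr0] at htri; simp at htri
        | some tri0 =>
          rw [htr0] at htri
          simp only [Option.map_some] at htri
          obtain rfl : Trail.map E.gv E.ga tri0 = tri := by injection htri
          obtain ⟨Si, hSi, hics⟩ := hidx i tri0 htr0
          have hconds0 := tes_conds hg'G htes hnilarr (Or.inl htTk) tri0 (getElem?_mem' htr0)
          have harr : ∀ a ∈ tri0.arrows, a ∈ g.Arr :=
            fun a ha => hg'sub.2.2.1 (hconds0.1 a ha)
          have hsrc : tri0.src ∈ g.Tk ∪ g.Cf := by
            rcases hconds0.2 with hy | hy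
            · exact Or.inl (hg'sub.1 hy)
            · exact Or.inr (hg'sub.2.1 hy)
          have htesg := E.tes_pb hgG hqp hSi harr hsrc
          refine ⟨Si.map (Trail.map E.gv E.ga), htesg, ?_⟩
          rw [List.getElem?_map, hics]
          simp only [Option.map_some]
          have hcondsSi := tes_conds hgG hSi harr hsrc
          rw [E.trGraph_pb hgG hqp hcondsSi]
          rfl
    · intro i ci' gi' ti' hci hgi
      rw [List.getElem?_map] at hci hgi
      cases hc0 : cs[i]? with
      | none => rw [hc0] at hci; simp at hci
      | some ci =>
        rw [hc0] at hci
        simp only [Option.map_some] at hci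
        obtain rfl : E.mapD ci = ci' := by injection hci
        cases hp0 : ics[i]? with
        | none => rw [hp0] at hgi; simp at hgi
        | some pr =>
          rw [hp0] at hgi
          simp only [Option.map_some] at hgi
          obtain ⟨gi, ti⟩ := pr
          have hpair : (E.pb gi, E.gv ti) = (gi', ti') := by injection hgi
          have h1' : E.pb gi = gi' := congrArg Prod.fst hpair
          have h2' : E.gv ti = ti' := congrArg Prod.snd hpair
          subst h1'
          subst h2'
          have hgiq : gi.Subgraph g :=
            isSplit_ics_sub ⟨hg'c, hg'sub, trs, htes, hlentrs, hidx⟩ hp0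
          exact ih i ci gi ti hc0 hp0 (Subgraph.trans hgiq hqp)

lemma mapD_dmatches {Ps : CSpace V A L} {δ : DTree V A L} {q : PreGraph V A L} {w : V}
    (h : IsDecompositionOf Ps δ q w) :
    ∀ (_ : q.Subgraph E.p), DMatches E.le E.fv E.fa (E.mapD δ) δ := by
  induction h with
  | single g t hc =>
    intro hqp
    rw [mapD_eq]
    refine DMatches.node _ _ _ _ _ _ (E.emb_pb hc.2.1.1 hqp)
      (E.fv_gv (Or.inl (hqp.1 hc.2.2.2.2.2.2.1))) (by simp) ?_
    intro i ci di h1 h2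
    simp at h2
  | split g t g' ics cs hc hsplit hlen hrec ih =>
    intro hqp
    rw [mapD_eq]
    have hg'p : g'.Subgraph E.p := Subgraph.trans hsplit.2.1 hqp
    refine DMatches.node _ _ _ _ _ _ (E.emb_pb hsplit.1.2.1.1 hg'p)
      (E.fv_gv (Or.inl (hg'p.1 hsplit.1.2.2.2.2.2.2.1))) (by simp) ?_
    intro i ci' di h1 h2
    rw [List.getElem?_map] at h1
    cases hc0 : cs[i]? with
    | none => rw [hc0] at h1; simp at h1
    | some ci =>
      rw [hc0] at h1
      simp only [Option.map_some] at h1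
      obtain rfl : E.mapD ci = ci' := by injection h1
      have hdi : ci = di := by
        rw [hc0] at h2
        injection h2
      subst hdi
      have hilen : i < cs.length := (List.getElem?_eq_some_iff.1 hc0).1
      have hlt : i < ics.length := hlen ▸ hilen
      obtain ⟨pr, hpr⟩ : ∃ pr, ics[i]? = some pr :=
        ⟨ics[i], List.getElem?_eq_some_iff.2 ⟨hlt, rfl⟩⟩
      obtain ⟨gi, ti⟩ := pr
      exact ih i ci gi ti hc0 hpr (Subgraph.trans (isSplit_ics_sub hsplit hpr) hqp)

end Ctx

/-- if a construction matches a pattern then every decomposition of the pattern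
describes some decomposition of the construction. -/
theorem matching_decomposition_exists {V A L : Type*}
    (Cs Ps : CSpace V A L) (hCs : IsCSpace Cs) (hPs : IsPatternSpace Cs Ps)
    (g : PreGraph V A L) (t : V) (hg : IsConstruction Cs g t)
    (p : PreGraph V A L) (v : V) (hp : IsConstruction Ps p v)
    (hm : MatchesPattern Cs.le g t p v)
    (Δ : DTree V A L) (hΔ : IsDecompositionOf Ps Δ p v) :
    ∃ D : DTree V A L, IsDecompositionOf Cs D g t ∧ DecompositionMatches Cs.le D Δ := by
  obtain ⟨fv0, fa0, hemb, hfvt⟩ := hm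
  obtain ⟨hTy, hle2, hC, hsig, hPsC, -⟩ := hPs
  let E : Ctx V A L := ⟨Cs.le, g, p, fv0, fa0, hg.2.1.1, hp.2.1.1, hemb,
    fun a b c h1 h2 => hCs.1.2.2.2 a b c h1 h2⟩
  have hpp : p.Subgraph E.p := Subgraph.refl p
  have hdec := E.mapD_decomp hTy hle2 hC hsig rfl hg hΔ hpp
  have hpbg : E.pb p = g := E.pb_p_eq_g
  have htTk : t ∈ g.Tk := hg.2.2.2.2.2.2.1
  have hgvv : E.gv v = t := by
    rw [← hfvt]
    exact E.gv_fv (Or.inl htTk)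
  rw [hpbg, hgvv] at hdec
  have hlab := E.labels_good hΔ hpp
  refine ⟨E.mapD Δ, hdec, fv0, fa0, ?_, ?_, ?_⟩
  · have hct : (E.mapD Δ).ctGraph = E.pb Δ.ctGraph := E.ctGraph_mapD Δ
    rw [hct]
    exact E.emb_pb (E.ctGraph_isGraph hlab) (E.ctGraph_sub fun r s hl => (hlab r s hl).2)
  · have h1 : (E.mapD Δ).rootTok = E.gv Δ.rootTok := E.mapD_rootTok Δ
    rw [h1, decomp_rootTok hΔ, hgvv]
    exact hfvt
  · exact E.mapD_dmatches hΔ hpp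

end RST
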